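/- arXiv:2203.12916 — 3 statements merged into one kernel-verified Lean document; each statement's English description precedes it below -/
import Mathlib

section
/- Let L ≥ 2, n ≥ 2 be integers and for m = Σ_{i=0}^{s} a_i L^{b_i} (base-L decomposition with b_0 > ... > b_s ≥ 0, a_i ∈ {1,...,L-1}) define ξ_m(K_L^n) = (L-1) n m − ex_m(K_L^n), where ex_m(K_L^n) = Σ_{i=0}^{s} [(L-1) a_i b_i L^{b_i} + (a_i−1) a_i L^{b_i}] + 2 Σ_{i=0}^{s-1} Σ_{k=i+1}^{s} a_i a_k L^{b_k}. Then for all 1 ≤ m < L^{⌊n/2⌋}, ξ_{m+1}(K_L^n) − ξ_m(K_L^n) ≥ 0, i.e., ξ_m(K_L^n) is nondecreasing on the interval 1 ≤ m ≤ L^{⌊n/2⌋}. -/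
/-- The base-`L` digit of `m` at position `j`, as an integer. -/
def dig (L m j : ℕ) : ℤ := ((Nat.digits L m).getD j 0 : ℤ)

/-- `ex_m(K_L^n)`: twice the maximum number of edges of an induced subgraph on `m`
vertices of the Hamming graph `K_L^n`, given by the explicit base-`L` formula
(it does not depend on `n`). -/
def exm (L m : ℕ) : ℤ :=
  (∑ j ∈ Finset.range (Nat.digits L m).length,
    (((L : ℤ) - 1) * dig L m j * j * (L : ℤ) ^ j + (dig L m j - 1) * dig L m j * (L : ℤ) ^ j))
  + 2 * ∑ j ∈ Finset.range (Nat.digits L m).length, ∑ j' ∈ Finset.range j,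
      dig L m j * dig L m j' * (L : ℤ) ^ j'

/-- `ξ_m(K_L^n) = (L-1) n m - ex_m(K_L^n)`. -/
def xi (L n m : ℕ) : ℤ := ((L : ℤ) - 1) * n * m - exm L m

open Finset

lemma sum_getD_cast (l : List ℕ) :
    ∑ j ∈ range l.length, ((l.getD j 0 : ℕ) : ℤ) = (l.sum : ℤ) := by
  induction l with
  | nil => simp
  | cons a l ih =>
    rw [List.length_cons, Finset.sum_range_succ']
    simp only [List.getD_cons_succ, List.getD_cons_zero, ih, List.sum_cons]
    push_cast; ring

lemma sum_getD_pow (L : ℕ) (l : List ℕ) :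
    ∑ j ∈ range l.length, ((l.getD j 0 : ℕ) : ℤ) * (L : ℤ) ^ j
      = ((Nat.ofDigits L l : ℕ) : ℤ) := by
  induction l with
  | nil => simp [Nat.ofDigits]
  | cons a l ih =>
    have h : ∑ j ∈ range l.length, ((l.getD j 0 : ℕ) : ℤ) * (L : ℤ) ^ (j + 1)
        = (L : ℤ) * ∑ j ∈ range l.length, ((l.getD j 0 : ℕ) : ℤ) * (L : ℤ) ^ j := by
      rw [Finset.mul_sum]; exact Finset.sum_congr rfl fun j _ => by ring
    rw [List.length_cons, Finset.sum_range_succ', Nat.ofDigits_cons]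
    simp only [List.getD_cons_succ, List.getD_cons_zero, pow_zero, mul_one,
      Nat.cast_add, Nat.cast_mul]
    rw [h, ih]; ring

lemma exm_rec (L q r : ℕ) (hL : 2 ≤ L) (hr : r < L) (hm : 0 < L * q + r) :
    exm L (L * q + r) = L * exm L q + (L : ℤ) * ((L : ℤ) - 1) * q
      + 2 * r * ((Nat.digits L q).sum : ℤ) + r * ((r : ℤ) - 1) := by
  have h1 : 1 < L := hL
  have hdig : Nat.digits L (L * q + r) = r :: Nat.digits L q := by
    rw [Nat.digits_def' h1 hm, Nat.mul_add_mod, Nat.mod_eq_of_lt hr,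
      Nat.mul_add_div (by omega), Nat.div_eq_of_lt hr, Nat.add_zero]
  set l := Nat.digits L q with hl
  have hdq : ∀ j, dig L q j = ((l.getD j 0 : ℕ) : ℤ) := fun j => rfl
  have hS : ∑ j ∈ range l.length, dig L q j = (l.sum : ℤ) := by
    simp only [hdq]; exact sum_getD_cast l
  have hQ : ∑ j ∈ range l.length, dig L q j * (L : ℤ) ^ j = (q : ℤ) := by
    simp only [hdq]
    rw [sum_getD_pow, hl, Nat.ofDigits_digits]
  have hdigm : ∀ j, dig L (L * q + r) (j + 1) = dig L q j := by
    intro j; simp [dig, hdig]; rfl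
  have hdig0 : dig L (L * q + r) 0 = (r : ℤ) := by simp [dig, hdig]
  unfold exm
  rw [hdig, ← hl, List.length_cons]
  simp_rw [Finset.sum_range_succ']
  simp only [hdigm, hdig0, Finset.range_zero, Finset.sum_empty, add_zero, pow_zero,
    mul_one, Nat.cast_zero, mul_zero, zero_mul, zero_add, Nat.cast_add, Nat.cast_one]
  have hA : ∑ x ∈ Finset.range l.length,
      (((L : ℤ) - 1) * dig L q x * ((x : ℤ) + 1) * (L : ℤ) ^ (x + 1)
        + (dig L q x - 1) * dig L q x * (L : ℤ) ^ (x + 1))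
      = (L : ℤ) * (∑ j ∈ Finset.range l.length,
          (((L : ℤ) - 1) * dig L q j * (j : ℤ) * (L : ℤ) ^ j
            + (dig L q j - 1) * dig L q j * (L : ℤ) ^ j))
        + (L : ℤ) * ((L : ℤ) - 1) * ∑ j ∈ Finset.range l.length, dig L q j * (L : ℤ) ^ j := by
    rw [Finset.mul_sum, Finset.mul_sum, ← Finset.sum_add_distrib]
    exact Finset.sum_congr rfl fun j _ => by ring
  have hC : ∑ x ∈ Finset.range l.length,
      (∑ x1 ∈ Finset.range x, dig L q x * dig L q x1 * (L : ℤ) ^ (x1 + 1)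
        + dig L q x * (r : ℤ)) =
      (L : ℤ) * ∑ j ∈ Finset.range l.length, ∑ j' ∈ Finset.range j,
          dig L q j * dig L q j' * (L : ℤ) ^ j'
        + (r : ℤ) * ∑ j ∈ Finset.range l.length, dig L q j := by
    rw [Finset.mul_sum, Finset.mul_sum, ← Finset.sum_add_distrib]
    refine Finset.sum_congr rfl fun j _ => ?_
    rw [Finset.mul_sum]
    congr 1
    · exact Finset.sum_congr rfl fun j' _ => by ring
    · ring
  rw [hA, hC, hS, hQ]
  ring

lemma digits_sum_rec (L q r : ℕ) (hL : 2 ≤ L) (hr : r < L) (hm : 0 < L * q + r) :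
    (Nat.digits L (L * q + r)).sum = r + (Nat.digits L q).sum := by
  rw [Nat.digits_def' hL hm, Nat.mul_add_mod, Nat.mod_eq_of_lt hr,
    Nat.mul_add_div (by omega), Nat.div_eq_of_lt hr, Nat.add_zero, List.sum_cons]

lemma exm_zero (L : ℕ) : exm L 0 = 0 := by simp [exm]

lemma exm_step (L : ℕ) (hL : 2 ≤ L) (m : ℕ) :
    exm L (m + 1) - exm L m = 2 * ((Nat.digits L m).sum : ℤ) := by
  induction m using Nat.strong_induction_on with
  | _ m ih =>
    rcases Nat.eq_zero_or_pos m with h0 | h0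
    · subst h0
      have h1 : exm L 1 = 0 := by
        have := exm_rec L 0 1 hL (by omega) (by omega)
        simpa [exm_zero] using this
      simp [h1, exm_zero]
    · set q := m / L with hq
      set r := m % L with hr
      have hrL : r < L := Nat.mod_lt m (by omega)
      have hm : m = L * q + r := (Nat.div_add_mod m L).symm
      have hSm : ((Nat.digits L m).sum : ℤ) = (r : ℤ) + ((Nat.digits L q).sum : ℤ) := by
        rw [hm, digits_sum_rec L q r hL hrL (hm ▸ h0)]
        push_cast; ring
      rcases Nat.lt_or_ge (r + 1) L with hcase | hcase
      · -- no carry: m + 1 = L * q + (r + 1)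
        have e1 : exm L (m + 1) = L * exm L q + (L : ℤ) * ((L : ℤ) - 1) * q
            + 2 * (r + 1 : ℕ) * ((Nat.digits L q).sum : ℤ)
            + (r + 1 : ℕ) * (((r + 1 : ℕ) : ℤ) - 1) := by
          rw [show m + 1 = L * q + (r + 1) by omega]
          exact exm_rec L q (r + 1) hL hcase (by omega)
        have e2 : exm L m = L * exm L q + (L : ℤ) * ((L : ℤ) - 1) * q
            + 2 * r * ((Nat.digits L q).sum : ℤ) + r * ((r : ℤ) - 1) := by
          rw [hm] at h0 ⊢; exact exm_rec L q r hL hrL h0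
        rw [e1, e2, hSm]
        push_cast; ring
      · -- carry: r = L - 1, m + 1 = L * (q + 1)
        have hrval : r = L - 1 := by omega
        have hqlt : q < m := Nat.div_lt_self h0 (by omega)
        have ihq := ih q hqlt
        have hsplit : m + 1 = L * (q + 1) + 0 := by
          rw [Nat.mul_add, Nat.mul_one]; omega
        have e1 : exm L (m + 1) = L * exm L (q + 1) + (L : ℤ) * ((L : ℤ) - 1) * ((q : ℤ) + 1) := by
          have h := exm_rec L (q + 1) 0 hL (by omega) (by omega)
          rw [hsplit, h]
          push_cast; ring
        have e2 : exm L m = L * exm L q + (L : ℤ) * ((L : ℤ) - 1) * q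
            + 2 * r * ((Nat.digits L q).sum : ℤ) + r * ((r : ℤ) - 1) := by
          rw [hm] at h0 ⊢; exact exm_rec L q r hL hrL h0
        have hrc : (r : ℤ) = (L : ℤ) - 1 := by omega
        rw [e1, e2, hSm, hrc]
        linear_combination (L : ℤ) * ihq

theorem stmt1 (L n : ℕ) (hL : 2 ≤ L) (hn : 2 ≤ n)
    (m : ℕ) (hm1 : 1 ≤ m) (hm2 : m < L ^ (n / 2)) :
    0 ≤ xi L n (m + 1) - xi L n m := by
  have hstep := exm_step L hL m
  have hlen : (Nat.digits L m).length ≤ n / 2 := by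
    rw [Nat.digits_len L m hL (by omega)]
    have := (Nat.log_lt_iff_lt_pow hL (by omega : m ≠ 0)).mpr hm2
    omega
  have hsum : (Nat.digits L m).sum ≤ (L - 1) * (n / 2) := by
    calc (Nat.digits L m).sum ≤ (Nat.digits L m).length • (L - 1) :=
          List.sum_le_card_nsmul _ _ (fun x hx => by
            have := Nat.digits_lt_base hL hx; omega)
      _ = (Nat.digits L m).length * (L - 1) := by rw [smul_eq_mul]
      _ ≤ (n / 2) * (L - 1) := Nat.mul_le_mul_right _ hlen
      _ = (L - 1) * (n / 2) := Nat.mul_comm _ _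
  have h2 : 2 * ((Nat.digits L m).sum : ℤ) ≤ ((L : ℤ) - 1) * n := by
    have hc : ((Nat.digits L m).sum : ℤ) ≤ ((L - 1 : ℕ) : ℤ) * ((n / 2 : ℕ) : ℤ) := by
      exact_mod_cast hsum
    have hL1 : ((L - 1 : ℕ) : ℤ) = (L : ℤ) - 1 := by omega
    have hn2 : 2 * ((n / 2 : ℕ) : ℤ) ≤ (n : ℤ) := by omega
    have hLpos : (0 : ℤ) ≤ (L : ℤ) - 1 := by
      have : (1 : ℤ) ≤ L := by exact_mod_cast (by omega : 1 ≤ L)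
      linarith
    calc 2 * ((Nat.digits L m).sum : ℤ)
        ≤ 2 * (((L - 1 : ℕ) : ℤ) * ((n / 2 : ℕ) : ℤ)) := by linarith
      _ = ((L : ℤ) - 1) * (2 * ((n / 2 : ℕ) : ℤ)) := by rw [hL1]; ring
      _ ≤ ((L : ℤ) - 1) * n := mul_le_mul_of_nonneg_left hn2 hLpos
  unfold xi
  rw [show ((L : ℤ) - 1) * n * ((m + 1 : ℕ) : ℤ) - exm L (m + 1)
      - (((L : ℤ) - 1) * n * m - exm L m)
      = ((L : ℤ) - 1) * n - (exm L (m + 1) - exm L m) by push_cast; ring]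
  rw [hstep]
  linarith
end

section
/- Let L ≥ 2, n ≥ 2, 0 ≤ t ≤ n−1, 1 ≤ g ≤ L−1 with gL^t ≤ ⌊L^n/2⌋. Then for every m with gL^t ≤ m ≤ ⌊L^n/2⌋, ξ_m(K_L^n) ≥ ξ_{gL^t}(K_L^n) = g[(L−1)(n−t) − (g−1)]L^t. -/
open Finset

def Vl (L : ℕ) (l : List ℕ) : ℤ := ∑ j ∈ range l.length, (l.getD j 0 : ℤ) * (L:ℤ)^j
def Sl (l : List ℕ) : ℤ := ∑ j ∈ range l.length, (l.getD j 0 : ℤ)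
def Fl (L : ℕ) (l : List ℕ) : ℤ :=
  (∑ j ∈ range l.length,
    (((L : ℤ) - 1) * (l.getD j 0 : ℤ) * j * (L : ℤ) ^ j + ((l.getD j 0 : ℤ) - 1) * (l.getD j 0 : ℤ) * (L : ℤ) ^ j))
  + 2 * ∑ j ∈ range l.length, ∑ j' ∈ range j, (l.getD j 0 : ℤ) * (l.getD j' 0 : ℤ) * (L : ℤ) ^ j'

lemma Vl_cons (L u : ℕ) (l : List ℕ) : Vl L (u :: l) = u + L * Vl L l := by
  unfold Vl
  rw [List.length_cons, Finset.sum_range_succ', Finset.mul_sum, add_comm]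
  simp only [List.getD_cons_succ, List.getD_cons_zero, pow_zero, mul_one]
  congr 1
  exact Finset.sum_congr rfl (fun j _ => by ring)

lemma Sl_cons (u : ℕ) (l : List ℕ) : Sl (u :: l) = u + Sl l := by
  unfold Sl
  rw [List.length_cons, Finset.sum_range_succ']
  simp [add_comm]

lemma Fl_cons (L u : ℕ) (l : List ℕ) :
    Fl L (u :: l) = L * Fl L l + ((L:ℤ)-1) * L * Vl L l + ((u:ℤ)-1) * u + 2 * u * Sl l := by
  unfold Fl
  rw [List.length_cons, Finset.sum_range_succ', Finset.sum_range_succ']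
  have h1 : (∑ j ∈ range l.length, ∑ j' ∈ range (j+1), ((u::l).getD (j+1) 0 : ℤ) * ((u::l).getD j' 0 : ℤ) * (L:ℤ)^j')
      = (L:ℤ) * (∑ j ∈ range l.length, ∑ j' ∈ range j, (l.getD j 0 : ℤ) * (l.getD j' 0 : ℤ) * (L:ℤ)^j')
        + (Sl l) * u := by
    rw [Finset.mul_sum, Sl, Finset.sum_mul, ← Finset.sum_add_distrib]
    refine Finset.sum_congr rfl (fun j _ => ?_)
    rw [Finset.sum_range_succ', Finset.mul_sum]
    simp only [List.getD_cons_succ, List.getD_cons_zero, pow_zero, mul_one]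
    congr 1
    exact Finset.sum_congr rfl (fun j' _ => by ring)
  have h2 : (∑ j ∈ range l.length,
      (((L : ℤ) - 1) * ((u::l).getD (j+1) 0 : ℤ) * (↑(j+1)) * (L : ℤ) ^ (j+1)
        + (((u::l).getD (j+1) 0 : ℤ) - 1) * ((u::l).getD (j+1) 0 : ℤ) * (L : ℤ) ^ (j+1)))
      = (L:ℤ) * (∑ j ∈ range l.length,
          (((L : ℤ) - 1) * (l.getD j 0 : ℤ) * j * (L : ℤ) ^ j + ((l.getD j 0 : ℤ) - 1) * (l.getD j 0 : ℤ) * (L : ℤ) ^ j))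
        + ((L:ℤ)-1) * L * Vl L l := by
    rw [Finset.mul_sum, Vl, Finset.mul_sum, ← Finset.sum_add_distrib]
    refine Finset.sum_congr rfl (fun j _ => ?_)
    simp only [List.getD_cons_succ]
    push_cast
    ring
  rw [h1, h2]
  simp only [List.getD_cons_zero, pow_zero, mul_one, Nat.cast_zero, Finset.range_zero,
    Finset.sum_empty]
  ring

lemma exm_eq_Fl (L m : ℕ) : exm L m = Fl L (Nat.digits L m) := rfl

lemma Fl_nil (L : ℕ) : Fl L [] = 0 := by simp [Fl]
lemma Sl_nil : Sl [] = 0 := by simp [Sl]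
lemma Vl_nil (L : ℕ) : Vl L [] = 0 := by simp [Vl]


lemma Vd (L : ℕ) (hL : 2 ≤ L) : ∀ m : ℕ, Vl L (Nat.digits L m) = m := by
  intro m
  induction m using Nat.strong_induction_on with
  | _ m ih =>
    rcases Nat.eq_zero_or_pos m with h | h
    · subst h; simp [Vl_nil]
    · rw [Nat.digits_def' (by omega : 1 < L) h, Vl_cons, ih _ (Nat.div_lt_self h (by omega))]
      have h2 : (L:ℤ) * ((m/L : ℕ):ℤ) + ((m%L : ℕ):ℤ) = m := by exact_mod_cast Nat.div_add_mod m L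
      linarith

lemma Sd_step (L : ℕ) (hL : 2 ≤ L) (m : ℕ) :
    Sl (Nat.digits L m) = ((m % L : ℕ) : ℤ) + Sl (Nat.digits L (m / L)) := by
  rcases Nat.eq_zero_or_pos m with h | h
  · subst h; simp [Sl_nil]
  · rw [Nat.digits_def' (by omega : 1 < L) h, Sl_cons]

lemma Fd_step (L : ℕ) (hL : 2 ≤ L) (m : ℕ) :
    Fl L (Nat.digits L m) = L * Fl L (Nat.digits L (m / L)) + ((L:ℤ)-1) * L * ((m / L : ℕ) : ℤ)
      + (((m % L : ℕ) : ℤ) - 1) * ((m % L : ℕ) : ℤ) + 2 * ((m % L : ℕ) : ℤ) * Sl (Nat.digits L (m / L)) := by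
  rcases Nat.eq_zero_or_pos m with h | h
  · subst h; simp [Fl_nil, Sl_nil]
  · rw [Nat.digits_def' (by omega : 1 < L) h, Fl_cons, Vd L hL]

lemma div_mod_pow (L : ℕ) (hL : 2 ≤ L) (s a r : ℕ) (hr : r < L^(s+1)) :
    (a * L^(s+1) + r) / L = a * L^s + r / L ∧ (a * L^(s+1) + r) % L = r % L := by
  have hr' : r = L * (r/L) + r % L := (Nat.div_add_mod r L).symm
  have hm : a*L^(s+1) + r = L*(a*L^s + r/L) + r % L := by
    conv_lhs => rw [hr']
    rw [pow_succ]; ring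
  constructor
  · rw [hm, Nat.mul_add_div (by omega), Nat.div_eq_of_lt (Nat.mod_lt r (by omega)), add_zero]
  · rw [hm, Nat.mul_add_mod, Nat.mod_mod_of_dvd _ dvd_rfl]

lemma Sd_top (L : ℕ) (hL : 2 ≤ L) :
    ∀ s a r, 0 < a → a < L → r < L^s →
      Sl (Nat.digits L (a * L^s + r)) = (a : ℤ) + Sl (Nat.digits L r) := by
  intro s
  induction s with
  | zero =>
    intro a r ha haL hr
    have hr0 : r = 0 := by simpa using hr
    subst hr0
    rw [Sd_step L hL (a * L^0 + 0)]
    simp [Nat.mod_eq_of_lt haL, Nat.div_eq_of_lt haL, Sl_nil]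
  | succ s ih =>
    intro a r ha haL hr
    obtain ⟨hq, hu⟩ := div_mod_pow L hL s a r hr
    have hrL : r / L < L ^ s := by
      rw [Nat.div_lt_iff_lt_mul (by omega)]
      rw [pow_succ] at hr; exact hr
    rw [Sd_step L hL (a * L^(s+1) + r), hq, hu, ih a (r/L) ha haL hrL,
      Sd_step L hL r]
    ring

lemma Fd_top (L : ℕ) (hL : 2 ≤ L) :
    ∀ (s a r : ℕ), 0 < a → a < L → r < L^s →
      Fl L (Nat.digits L (a * L^s + r)) = Fl L (Nat.digits L r)
        + ((L:ℤ)-1) * a * s * (L:ℤ)^s + ((a:ℤ)-1) * a * (L:ℤ)^s + 2 * a * r := by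
  intro s
  induction s with
  | zero =>
    intro a r ha haL hr
    have hr0 : r = 0 := by simpa using hr
    subst hr0
    rw [Fd_step L hL (a * L^0 + 0)]
    simp [Nat.mod_eq_of_lt haL, Nat.div_eq_of_lt haL, Sl_nil, Fl_nil]
  | succ s ih =>
    intro a r ha haL hr
    obtain ⟨hq, hu⟩ := div_mod_pow L hL s a r hr
    have hrL : r / L < L ^ s := by
      rw [Nat.div_lt_iff_lt_mul (by omega)]
      rw [pow_succ] at hr; exact hr
    have hcast : (L:ℤ) * ((r/L : ℕ):ℤ) + ((r%L : ℕ):ℤ) = (r:ℤ) := by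
      exact_mod_cast Nat.div_add_mod r L
    rw [Fd_step L hL (a * L^(s+1) + r), hq, hu, ih a (r/L) ha haL hrL,
      Sd_top L hL s a (r/L) ha haL hrL, Fd_step L hL r]
    push_cast
    linear_combination (2*(a:ℤ)) * Int.mul_ediv_add_emod (r:ℤ) (L:ℤ)

lemma exm_top (L : ℕ) (hL : 2 ≤ L) (s a r : ℕ) (ha : 0 < a) (haL : a < L) (hr : r < L^s) :
    exm L (a * L^s + r) = exm L r
        + ((L:ℤ)-1) * a * s * (L:ℤ)^s + ((a:ℤ)-1) * a * (L:ℤ)^s + 2 * a * r := by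
  rw [exm_eq_Fl, exm_eq_Fl]
  exact Fd_top L hL s a r ha haL hr

lemma xi_zero (L n : ℕ) : xi L n 0 = 0 := by simp [xi, exm_zero]

lemma xi_rec (L n : ℕ) (hL : 2 ≤ L) (s a r : ℕ) (ha : 0 < a) (haL : a < L) (hr : r < L^s) :
    xi L n (a * L^s + r) = xi L n r
      + (a:ℤ) * (((L:ℤ)-1) * ((n:ℤ)-(s:ℤ)) - ((a:ℤ)-1)) * (L:ℤ)^s - 2 * a * r := by
  unfold xi
  rw [exm_top L hL s a r ha haL hr]
  push_cast
  ring

lemma xi_lb (L n : ℕ) (hL : 2 ≤ L) :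
    ∀ r : ℕ, ∀ s : ℕ, r < L^s → ((L:ℤ)-1) * ((n:ℤ)-(s:ℤ)) * r ≤ xi L n r := by
  intro r
  induction r using Nat.strong_induction_on with
  | _ r ih =>
    intro s hrs
    rcases Nat.eq_zero_or_pos r with h | h
    · subst h; simp [xi_zero]
    · set s' := Nat.log L r with hs'
      have hP1 : L ^ s' ≤ r := Nat.pow_log_le_self L h.ne'
      have hP2 : r < L ^ (s' + 1) := Nat.lt_pow_succ_log_self (by omega) r
      set a := r / L ^ s' with ha
      set r' := r % L ^ s' with hr'
      have hPpos : 0 < L ^ s' := Nat.pow_pos (by omega)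
      have ha1 : 0 < a := Nat.div_pos hP1 hPpos
      have haL : a < L := by
        rw [ha, Nat.div_lt_iff_lt_mul hPpos]
        calc r < L ^ (s'+1) := hP2
        _ = L * L ^ s' := by ring
      have hr'P : r' < L ^ s' := Nat.mod_lt _ hPpos
      have hdecomp : a * L ^ s' + r' = r := by
        rw [ha, hr', mul_comm]; exact Nat.div_add_mod r (L ^ s')
      have hss : s' < s := by
        have h2 : L ^ s' < L ^ s := lt_of_le_of_lt hP1 hrs
        exact (Nat.pow_lt_pow_iff_right (by omega)).mp h2
      have hlt : r' < r := lt_of_lt_of_le hr'P hP1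
      have ihr' := ih r' hlt s' hr'P
      have hrec := xi_rec L n hL s' a r' ha1 haL hr'P
      rw [hdecomp] at hrec
      rw [hrec]
      have hrcast : (r:ℤ) = a * (L:ℤ)^s' + r' := by
        rw [← hdecomp]; push_cast; ring
      have hPc : (1:ℤ) ≤ (L:ℤ)^s' := by exact_mod_cast hPpos
      have hr'c : (r':ℤ) ≤ (L:ℤ)^s' - 1 := by
        have h3 : (r':ℤ) < (L:ℤ)^s' := by exact_mod_cast hr'P
        omega
      have hac : (1:ℤ) ≤ (a:ℤ) := by exact_mod_cast ha1
      have hac2 : (a:ℤ) ≤ (L:ℤ) - 1 := by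
        have h4 : (a:ℤ) < (L:ℤ) := by exact_mod_cast haL
        omega
      have hssc : (s':ℤ) + 1 ≤ (s:ℤ) := by exact_mod_cast hss
      have hr'0 : (0:ℤ) ≤ (r':ℤ) := Int.natCast_nonneg _
      have hslack : 0 ≤ (a:ℤ) * (L:ℤ)^s' * ((L:ℤ) - a) + (r':ℤ) * ((L:ℤ) - 1 - 2*a) := by
        rcases le_or_gt (2*(a:ℤ)) ((L:ℤ)-1) with hc | hc
        · have t1 : (0:ℤ) ≤ (a:ℤ) * (L:ℤ)^s' * ((L:ℤ) - a) := by
            apply mul_nonneg (mul_nonneg (by linarith) (by positivity)); linarith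
          have t2 : (0:ℤ) ≤ (r':ℤ) * ((L:ℤ) - 1 - 2*a) := mul_nonneg hr'0 (by linarith)
          linarith
        · have h1 : 0 ≤ ((L:ℤ)^s' - 1 - r') * (2*a - ((L:ℤ)-1)) :=
            mul_nonneg (by linarith) (by linarith)
          have h2 : 0 ≤ (L:ℤ)^s' * ((a:ℤ)+1) * ((L:ℤ)-1-a) := by
            apply mul_nonneg (mul_nonneg (by positivity) (by linarith)); linarith
          nlinarith [h1, h2]
      have hmono : ((L:ℤ)-1) * ((n:ℤ)-(s:ℤ)) * r ≤ ((L:ℤ)-1) * ((n:ℤ)-(s':ℤ)-1) * r := by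
        have h5 : (0:ℤ) ≤ r := Int.natCast_nonneg _
        have hLL : (0:ℤ) ≤ (L:ℤ) - 1 := by
          have h6 : (2:ℤ) ≤ L := by exact_mod_cast hL
          linarith
        have key := mul_le_mul_of_nonneg_left
          (show (n:ℤ)-(s:ℤ) ≤ (n:ℤ)-(s':ℤ)-1 by linarith) (mul_nonneg hLL h5)
        nlinarith [key]
      refine le_trans hmono ?_
      rw [hrcast]
      have hkey : xi L n r' + (a:ℤ) * (((L:ℤ) - 1) * ((n:ℤ) - (s':ℤ)) - ((a:ℤ) - 1)) * (L:ℤ) ^ s' - 2 * (a:ℤ) * (r':ℤ)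
          - ((L:ℤ) - 1) * ((n:ℤ) - (s':ℤ) - 1) * ((a:ℤ) * (L:ℤ) ^ s' + (r':ℤ))
          = (xi L n r' - ((L:ℤ)-1)*((n:ℤ)-(s':ℤ))*(r':ℤ))
            + ((a:ℤ) * (L:ℤ)^s' * ((L:ℤ) - (a:ℤ)) + (r':ℤ) * ((L:ℤ) - 1 - 2*(a:ℤ))) := by ring
      linarith [hkey, hslack, ihr']

set_option maxHeartbeats 2000000 in
theorem stmt7 (L n t g : ℕ) (hL : 2 ≤ L) (hn : 2 ≤ n) (ht : t ≤ n - 1)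
    (hg1 : 1 ≤ g) (hg2 : g ≤ L - 1) (hgt : g * L ^ t ≤ L ^ n / 2)
    (m : ℕ) (hm1 : g * L ^ t ≤ m) (hm2 : m ≤ L ^ n / 2) :
    xi L n (g * L ^ t) ≤ xi L n m ∧
      xi L n (g * L ^ t)
        = (g : ℤ) * (((L : ℤ) - 1) * ((n : ℤ) - (t : ℤ)) - ((g : ℤ) - 1)) * (L : ℤ) ^ t := by
  have hLpos : 1 < L := by omega
  have hgL : g < L := by omega
  have hg0 : 0 < g := hg1
  have htn : t + 1 ≤ n := by omega
  have hpow_t : 0 < L ^ t := Nat.pow_pos (by omega)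
  have heq : xi L n (g * L ^ t)
      = (g : ℤ) * (((L : ℤ) - 1) * ((n : ℤ) - (t : ℤ)) - ((g : ℤ) - 1)) * (L : ℤ) ^ t := by
    have h := xi_rec L n hL t g 0 hg0 hgL hpow_t
    rw [add_zero] at h
    rw [h, xi_zero]
    push_cast
    ring
  refine ⟨?_, heq⟩
  rw [heq]
  -- basic facts
  have h2m : 2 * m ≤ L ^ n := by
    have h := (Nat.le_div_iff_mul_le (by norm_num : 0 < 2)).mp hm2
    omega
  have hm0 : 0 < m := lt_of_lt_of_le (Nat.mul_pos hg0 hpow_t) hm1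
  have hmLn : m < L ^ n := by omega
  set s := Nat.log L m with hs
  have hP1 : L ^ s ≤ m := Nat.pow_log_le_self L hm0.ne'
  have hP2 : m < L ^ (s+1) := Nat.lt_pow_succ_log_self hLpos m
  set a := m / L ^ s with ha
  set r := m % L ^ s with hr
  have hPpos : 0 < L ^ s := Nat.pow_pos (by omega)
  have ha1 : 0 < a := Nat.div_pos hP1 hPpos
  have haL : a < L := by
    rw [ha, Nat.div_lt_iff_lt_mul hPpos]
    calc m < L ^ (s+1) := hP2
    _ = L * L ^ s := by ring
  have hrP : r < L ^ s := Nat.mod_lt _ hPpos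
  have hdecomp : a * L ^ s + r = m := by
    rw [ha, hr, mul_comm]; exact Nat.div_add_mod m (L ^ s)
  have hsn : s < n := Nat.log_lt_of_lt_pow hm0.ne' hmLn
  have hts : t ≤ s := by
    have h1 : L ^ t ≤ m := le_trans (Nat.le_mul_of_pos_left _ hg0) hm1
    exact (Nat.le_log_iff_pow_le hLpos hm0.ne').mpr h1
  -- integer facts
  have hLc : (2:ℤ) ≤ (L:ℤ) := by exact_mod_cast hL
  have hAc : (1:ℤ) ≤ (a:ℤ) := by exact_mod_cast ha1
  have hAc2 : (a:ℤ) ≤ (L:ℤ) - 1 := by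
    have : (a:ℤ) < (L:ℤ) := by exact_mod_cast haL
    omega
  have hGc : (1:ℤ) ≤ (g:ℤ) := by exact_mod_cast hg1
  have hGc2 : (g:ℤ) ≤ (L:ℤ) - 1 := by
    have : (g:ℤ) < (L:ℤ) := by exact_mod_cast hgL
    omega
  have hRc : (0:ℤ) ≤ (r:ℤ) := Int.natCast_nonneg _
  have hsnc : (s:ℤ) + 1 ≤ (n:ℤ) := by exact_mod_cast hsn
  have htsc : (t:ℤ) ≤ (s:ℤ) := by exact_mod_cast hts
  have hPsc : (1:ℤ) ≤ (L:ℤ) ^ s := by exact_mod_cast hPpos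
  have hPtc : (1:ℤ) ≤ (L:ℤ) ^ t := by exact_mod_cast hpow_t
  -- if s is the top level, the top digit is at most L/2
  have h2a : s + 1 = n → 2 * a ≤ L := by
    intro hsn1
    have h1 : (2 * a) * L ^ s ≤ L * L ^ s := by
      calc (2 * a) * L ^ s = 2 * (a * L ^ s) := by ring
      _ ≤ 2 * m := by
          have : a * L ^ s ≤ m := by omega
          omega
      _ ≤ L ^ n := h2m
      _ = L * L ^ s := by rw [← hsn1, pow_succ]; ring
    exact Nat.le_of_mul_le_mul_right h1 hPpos
  have hr0 : s + 1 = n → 2 * a = L → r = 0 := by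
    intro hsn1 h2aL
    have h1 : 2 * (a * L ^ s) + 2 * r ≤ 2 * (a * L ^ s) := by
      calc 2 * (a * L ^ s) + 2 * r = 2 * m := by omega
      _ ≤ L ^ n := h2m
      _ = (2 * a) * L ^ s := by rw [← hsn1, pow_succ, h2aL]; ring
      _ = 2 * (a * L ^ s) := by ring
    omega
  have hrec := xi_rec L n hL s a r ha1 haL hrP
  rw [hdecomp] at hrec
  have hxir := xi_lb L n hL r s hrP
  -- step 1 : xi m >= C(a,s)
  have hRterm : 0 ≤ (((L:ℤ)-1) * ((n:ℤ)-(s:ℤ)) - 2*(a:ℤ)) * (r:ℤ) := by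
    rcases Nat.lt_or_ge (s+1) n with hc | hc
    · apply mul_nonneg _ hRc
      have hc2 : (s:ℤ) + 2 ≤ (n:ℤ) := by exact_mod_cast hc
      linarith [mul_nonneg (show (0:ℤ) ≤ (L:ℤ)-1 by linarith) (show (0:ℤ) ≤ (n:ℤ)-(s:ℤ)-2 by linarith)]
    · have hsn1 : s + 1 = n := by omega
      have h2a' := h2a hsn1
      rcases Nat.lt_or_ge (2*a) L with hc2 | hc2
      · apply mul_nonneg _ hRc
        have hNS : (n:ℤ) - (s:ℤ) = 1 := by
          have : ((s:ℤ)+1) = (n:ℤ) := by exact_mod_cast hsn1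
          linarith
        have hc3 : 2*(a:ℤ) + 1 ≤ (L:ℤ) := by exact_mod_cast hc2
        rw [hNS]; linarith
      · have hr00 : r = 0 := hr0 hsn1 (by omega)
        rw [hr00]; simp
  have hstep1 : (a:ℤ) * (((L:ℤ)-1) * ((n:ℤ)-(s:ℤ)) - ((a:ℤ)-1)) * (L:ℤ)^s ≤ xi L n m := by
    rw [hrec]
    linarith [hRterm, hxir]
  -- step 2 : C(a,s) >= C(g,t)
  have hstep2 : (g:ℤ) * (((L:ℤ)-1) * ((n:ℤ)-(t:ℤ)) - ((g:ℤ)-1)) * (L:ℤ)^t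
      ≤ (a:ℤ) * (((L:ℤ)-1) * ((n:ℤ)-(s:ℤ)) - ((a:ℤ)-1)) * (L:ℤ)^s := by
    rcases eq_or_lt_of_le hts with hst | hst
    · -- s = t
      rw [← hst]
      have hga : g ≤ a := by
        have h1 : g * L ^ t < (a+1) * L ^ t := by
          calc g * L ^ t ≤ m := hm1
          _ = a * L ^ s + r := hdecomp.symm
          _ < a * L ^ s + L ^ s := by omega
          _ = (a+1) * L ^ t := by rw [← hst]; ring
        have := Nat.lt_of_mul_lt_mul_right h1
        omega
      have hGA : (g:ℤ) ≤ (a:ℤ) := by exact_mod_cast hga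
      have key : (g:ℤ) * (((L:ℤ)-1) * ((n:ℤ)-(t:ℤ)) - ((g:ℤ)-1))
          ≤ (a:ℤ) * (((L:ℤ)-1) * ((n:ℤ)-(t:ℤ)) - ((a:ℤ)-1)) := by
        rcases Nat.lt_or_ge (s+1) n with hc | hc
        · have hc2 : (t:ℤ) + 2 ≤ (n:ℤ) := by
            have : (s:ℤ)+2 ≤ (n:ℤ) := by exact_mod_cast hc
            have hstc : (t:ℤ) = (s:ℤ) := by exact_mod_cast hst
            linarith
          have hbr : 0 ≤ ((L:ℤ)-1) * ((n:ℤ)-(t:ℤ)) + 1 - (a:ℤ) - (g:ℤ) := by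
            linarith [mul_nonneg (show (0:ℤ) ≤ (L:ℤ)-1 by linarith) (show (0:ℤ) ≤ (n:ℤ)-(t:ℤ)-2 by linarith)]
          linarith [mul_nonneg (show (0:ℤ) ≤ (a:ℤ)-(g:ℤ) by linarith) hbr]
        · have hsn1 : s + 1 = n := by omega
          have h2a' : 2*(a:ℤ) ≤ (L:ℤ) := by exact_mod_cast h2a hsn1
          have hNT : (n:ℤ) - (t:ℤ) = 1 := by
            have e1 : ((s:ℤ)+1) = (n:ℤ) := by exact_mod_cast hsn1
            have e2 : (t:ℤ) = (s:ℤ) := by exact_mod_cast hst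
            linarith
          rw [hNT]
          rcases eq_or_lt_of_le hGA with he | he
          · rw [he]
          · have hGA1 : (g:ℤ) + 1 ≤ (a:ℤ) := by exact_mod_cast he
            have hbr : 0 ≤ (L:ℤ) - (a:ℤ) - (g:ℤ) := by linarith
            linarith [mul_nonneg (show (0:ℤ) ≤ (a:ℤ)-(g:ℤ) by linarith) hbr]
      exact mul_le_mul_of_nonneg_right key (by linarith)
    · -- t < s
      set k := s - t with hk
      have hkst : s = k + t := by omega
      have hk1 : 1 ≤ k := by omega
      have hkc : (1:ℤ) ≤ (k:ℤ) := by exact_mod_cast hk1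
      have hQ : 1 + (k:ℤ) * ((L:ℤ)-1) ≤ (L:ℤ)^k := by
        have h := one_add_mul_le_pow (show (-2:ℤ) ≤ (L:ℤ)-1 by linarith) k
        rw [show (1:ℤ) + ((L:ℤ)-1) = (L:ℤ) by ring] at h
        exact h
      have hpows : (L:ℤ)^s = (L:ℤ)^k * (L:ℤ)^t := by rw [hkst, pow_add]
      have hQ1 : (1:ℤ) ≤ (L:ℤ)^k := by
        have h0 : 0 < L^k := Nat.pow_pos (by omega)
        exact_mod_cast h0
      have hNT : (n:ℤ) - (t:ℤ) = ((n:ℤ) - (s:ℤ)) + (k:ℤ) := by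
        have : (s:ℤ) = (k:ℤ) + (t:ℤ) := by exact_mod_cast hkst
        linarith
      have hd1 : (1:ℤ) ≤ (n:ℤ) - (s:ℤ) := by linarith
      have hB0 : (0:ℤ) ≤ (L:ℤ) - 1 := by linarith
      -- abbreviations by generalization
      -- c1 : C(g,t)/L^t ≤ B*(B*(N-T)+1-B)
      have c1 : (g:ℤ) * (((L:ℤ)-1) * ((n:ℤ)-(t:ℤ)) - ((g:ℤ)-1))
          ≤ ((L:ℤ)-1) * (((L:ℤ)-1) * ((n:ℤ)-(t:ℤ)) + 1 - ((L:ℤ)-1)) := by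
        have hbr : 0 ≤ ((L:ℤ)-1) * ((n:ℤ)-(t:ℤ)) + 1 - ((L:ℤ)-1) - (g:ℤ) := by
          linarith [mul_nonneg hB0 (show (0:ℤ) ≤ (n:ℤ)-(t:ℤ)-2 by linarith)]
        linarith [mul_nonneg (show (0:ℤ) ≤ ((L:ℤ)-1)-(g:ℤ) by linarith) hbr]
      -- c2 : B*(N-S) ≤ A*(B*(N-S)+1-A)
      have c2 : ((L:ℤ)-1) * ((n:ℤ)-(s:ℤ))
          ≤ (a:ℤ) * (((L:ℤ)-1) * ((n:ℤ)-(s:ℤ)) + 1 - (a:ℤ)) := by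
        have hBd : (a:ℤ) ≤ ((L:ℤ)-1) * ((n:ℤ)-(s:ℤ)) := by
          linarith [mul_nonneg hB0 (show (0:ℤ) ≤ (n:ℤ)-(s:ℤ)-1 by linarith)]
        linarith [mul_nonneg (show (0:ℤ) ≤ (a:ℤ)-1 by linarith)
          (show (0:ℤ) ≤ ((L:ℤ)-1)*((n:ℤ)-(s:ℤ)) - (a:ℤ) by linarith)]
      -- c3 : B*(B*(N-T)+1-B) ≤ B*(N-S)*L^k
      have c3 : ((L:ℤ)-1) * (((L:ℤ)-1) * ((n:ℤ)-(t:ℤ)) + 1 - ((L:ℤ)-1))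
          ≤ ((L:ℤ)-1) * ((n:ℤ)-(s:ℤ)) * (L:ℤ)^k := by
        have hBd0 : (0:ℤ) ≤ ((L:ℤ)-1) * ((n:ℤ)-(s:ℤ)) :=
          mul_nonneg hB0 (by linarith)
        have h1 : ((L:ℤ)-1) * ((n:ℤ)-(s:ℤ)) * (1 + (k:ℤ) * ((L:ℤ)-1))
            ≤ ((L:ℤ)-1) * ((n:ℤ)-(s:ℤ)) * (L:ℤ)^k :=
          mul_le_mul_of_nonneg_left hQ hBd0
        have h2 : ((L:ℤ)-1) * (((L:ℤ)-1) * ((n:ℤ)-(t:ℤ)) + 1 - ((L:ℤ)-1))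
            ≤ ((L:ℤ)-1) * ((n:ℤ)-(s:ℤ)) * (1 + (k:ℤ) * ((L:ℤ)-1)) := by
          rw [hNT]
          linarith [mul_nonneg (mul_nonneg (mul_nonneg hB0 hB0)
              (show (0:ℤ) ≤ (n:ℤ)-(s:ℤ)-1 by linarith)) (show (0:ℤ) ≤ (k:ℤ)-1 by linarith),
            mul_nonneg hB0 (show (0:ℤ) ≤ (n:ℤ)-(s:ℤ)-1 by linarith)]
        linarith
      -- combine
      have hCas : (a:ℤ) * (((L:ℤ)-1) * ((n:ℤ)-(s:ℤ)) - ((a:ℤ)-1)) * (L:ℤ)^s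
          = ((a:ℤ) * (((L:ℤ)-1) * ((n:ℤ)-(s:ℤ)) + 1 - (a:ℤ)) * (L:ℤ)^k) * (L:ℤ)^t := by
        rw [hpows]; ring
      rw [hCas]
      apply mul_le_mul_of_nonneg_right _ (by linarith)
      calc (g:ℤ) * (((L:ℤ)-1) * ((n:ℤ)-(t:ℤ)) - ((g:ℤ)-1))
          ≤ ((L:ℤ)-1) * (((L:ℤ)-1) * ((n:ℤ)-(t:ℤ)) + 1 - ((L:ℤ)-1)) := by
            have h := c1; linarith
      _ ≤ ((L:ℤ)-1) * ((n:ℤ)-(s:ℤ)) * (L:ℤ)^k := c3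
      _ ≤ ((a:ℤ) * (((L:ℤ)-1) * ((n:ℤ)-(s:ℤ)) + 1 - (a:ℤ))) * (L:ℤ)^k :=
            mul_le_mul_of_nonneg_right c2 (by positivity)
  exact le_trans hstep2 hstep1
end

section
/- Let L ≥ 2, n ≥ 1 and 0 ≤ t ≤ n−1. The L^t-extra edge-connectivity of the Hamming graph K_L^n (the minimum size of an edge set F such that K_L^n − F is disconnected and every component has at least L^t vertices) equals (L−1)(n−t)L^t. -/
/-- The Hamming graph `K_L^n`: vertices are the strings in `{0,…,L-1}^n`, two vertices
being adjacent iff they differ in exactly one coordinate. -/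
def hammingGraph (L n : ℕ) : SimpleGraph (Fin n → Fin L) where
  Adj u v := u ≠ v ∧ ∀ i j : Fin n, u i ≠ v i → u j ≠ v j → i = j
  symm := ⟨fun _ _ ⟨h1, h2⟩ => ⟨h1.symm, fun i j hi hj => h2 i j hi.symm hj.symm⟩⟩
  loopless := ⟨fun _ ⟨h1, _⟩ => h1 rfl⟩

/-- The `h`-extra edge-connectivity of `K_L^n`: the minimum size of an edge set `F` such
that `K_L^n − F` is disconnected and every component has at least `h` vertices. -/
noncomputable def extraEC (L n h : ℕ) : ℕ :=
  sInf {k | ∃ F : Finset (Sym2 (Fin n → Fin L)),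
    ↑F ⊆ (hammingGraph L n).edgeSet ∧
    ¬((hammingGraph L n).deleteEdges ↑F).Connected ∧
    (∀ C : ((hammingGraph L n).deleteEdges ↑F).ConnectedComponent, h ≤ C.supp.ncard) ∧
    F.card = k}

open Finset Real

namespace HIso

variable {L n : ℕ} [NeZero L]

abbrev V (L n : ℕ) := Fin n → Fin L

/-- Mask the coordinates in `J` to `0`. -/
def repJ (J : Finset (Fin n)) (x : V L n) : V L n := fun j => if j ∈ J then 0 else x j

/-- Number of elements of `S` agreeing with `x` outside of `J`. -/
def cntJ (S : Finset (V L n)) (J : Finset (Fin n)) (x : V L n) : ℕ :=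
  (S.filter (fun y => repJ J y = repJ J x)).card

lemma repJ_eq_iff {J : Finset (Fin n)} {x y : V L n} :
    repJ J y = repJ J x ↔ ∀ j, j ∉ J → y j = x j := by
  constructor
  · intro h j hj
    have := congrFun h j
    simpa [repJ, hj] using this
  · intro h
    funext j
    by_cases hj : j ∈ J <;> simp [repJ, hj]
    exact h j hj

lemma repJ_trans_subset {J J' : Finset (Fin n)} (h : J ⊆ J') {x y : V L n}
    (hxy : repJ J y = repJ J x) : repJ J' y = repJ J' x := by
  rw [repJ_eq_iff] at hxy ⊢
  exact fun j hj => hxy j (fun hc => hj (h hc))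

lemma cntJ_pos {S : Finset (V L n)} {J : Finset (Fin n)} {x : V L n} (hx : x ∈ S) :
    0 < cntJ S J x :=
  Finset.card_pos.2 ⟨x, Finset.mem_filter.2 ⟨hx, rfl⟩⟩

lemma cntJ_empty {S : Finset (V L n)} {x : V L n} (hx : x ∈ S) : cntJ S ∅ x = 1 := by
  classical
  have hrep : ∀ y : V L n, repJ (∅ : Finset (Fin n)) y = y := by
    intro y; funext j; simp [repJ]
  unfold cntJ
  simp only [hrep]
  rw [Finset.filter_eq']
  simp [hx]

lemma cntJ_univ {S : Finset (V L n)} {x : V L n} : cntJ S univ x = S.card := by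
  classical
  have hrep : ∀ y z : V L n, repJ univ y = repJ univ z := by
    intro y z; funext j; simp [repJ]
  unfold cntJ
  rw [Finset.filter_true_of_mem (fun y _ => hrep y x)]

lemma card_fiber_univ (i : Fin n) (x : V L n) :
    ((univ : Finset (V L n)).filter (fun y => repJ {i} y = repJ {i} x)).card = L := by
  classical
  have himg : (univ : Finset (V L n)).filter (fun y => repJ {i} y = repJ {i} x)
      = (univ : Finset (Fin L)).image (fun c => Function.update x i c) := by
    ext y
    simp only [Finset.mem_filter, Finset.mem_univ, true_and, Finset.mem_image]
    constructor
    · intro h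
      refine ⟨y i, ?_⟩
      funext j
      by_cases hj : j = i
      · subst hj; simp [Function.update]
      · rw [repJ_eq_iff] at h
        have := h j (by simp [hj])
        simp [Function.update, hj, this]
    · rintro ⟨c, -, rfl⟩
      rw [repJ_eq_iff]
      intro j hj
      have : j ≠ i := by simpa using hj
      simp [Function.update, this]
  rw [himg, Finset.card_image_of_injective _ ?_, Finset.card_univ, Fintype.card_fin]
  intro a b hab
  have := congrFun hab i
  simpa using this

lemma cntJ_single_le (S : Finset (V L n)) (i : Fin n) (x : V L n) : cntJ S {i} x ≤ L := by
  classical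
  calc cntJ S {i} x ≤ ((univ : Finset (V L n)).filter (fun y => repJ {i} y = repJ {i} x)).card :=
        Finset.card_le_card (Finset.filter_subset_filter _ (Finset.subset_univ S))
  _ = L := card_fiber_univ i x

lemma sum_mul_cnt_le {S : Finset (V L n)} {J : Finset (Fin n)} {i₀ : Fin n} (hi₀ : i₀ ∉ J)
    (Φ : Finset (V L n))
    (hfib : ∀ x ∈ Φ, ∀ y ∈ S, (repJ J y = repJ J x ∨ repJ {i₀} y = repJ {i₀} x) → y ∈ Φ) :
    ∑ x ∈ Φ, cntJ S J x * cntJ S {i₀} x ≤ Φ.card ^ 2 := by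
  classical
  have hsig : ∑ x ∈ Φ, cntJ S J x * cntJ S {i₀} x
      = (Φ.sigma (fun x => (S.filter (fun y => repJ J y = repJ J x)) ×ˢ
          (S.filter (fun z => repJ {i₀} z = repJ {i₀} x)))).card := by
    rw [Finset.card_sigma]
    exact Finset.sum_congr rfl (fun x _ => by rw [Finset.card_product]; rfl)
  rw [hsig, sq, ← Finset.card_product]
  apply Finset.card_le_card_of_injOn (fun p => (p.2.1, p.2.2))
  · rintro ⟨x, y, z⟩ hp
    simp only [Finset.coe_sigma, Set.mem_sigma_iff, Finset.mem_coe, Finset.mem_sigma, Finset.mem_product, Finset.mem_filter] at hp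
    obtain ⟨hx, ⟨⟨hyS, hy⟩, hzS, hz⟩⟩ := hp
    exact Finset.mem_product.2 ⟨hfib x hx y hyS (Or.inl hy), hfib x hx z hzS (Or.inr hz)⟩
  · rintro ⟨x, y, z⟩ hp ⟨x', y', z'⟩ hp' heq
    simp only [Finset.coe_sigma, Set.mem_sigma_iff, Finset.mem_coe, Finset.mem_product,
      Finset.mem_filter] at hp hp'
    obtain ⟨hx, ⟨⟨hyS, hy⟩, hzS, hz⟩⟩ := hp
    obtain ⟨hx', ⟨⟨hyS', hy'⟩, hzS', hz'⟩⟩ := hp'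
    have hyy : y = y' := congrArg Prod.fst heq
    have hzz : z = z' := congrArg Prod.snd heq
    subst hyy; subst hzz
    have hxx : x = x' := by
      funext j
      by_cases hj : j ∈ J
      · have hne : j ∉ ({i₀} : Finset (Fin n)) := by
          simp only [Finset.mem_singleton]
          rintro rfl; exact hi₀ hj
        have h1 := (repJ_eq_iff.1 hz) j hne
        have h2 := (repJ_eq_iff.1 hz') j hne
        rw [← h1, h2]
      · have h1 := (repJ_eq_iff.1 hy) j hj
        have h2 := (repJ_eq_iff.1 hy') j hj
        rw [← h1, h2]
    subst hxx
    rfl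

lemma gibbs {S : Finset (V L n)} {J : Finset (Fin n)} {i₀ : Fin n} (hi₀ : i₀ ∉ J) :
    ∑ x ∈ S, ((cntJ S J x : ℝ) * cntJ S {i₀} x / cntJ S (insert i₀ J) x) ≤ S.card := by
  classical
  set J' := insert i₀ J with hJ'
  have hJsub : J ⊆ J' := Finset.subset_insert _ _
  have hisub : ({i₀} : Finset (Fin n)) ⊆ J' := by
    intro j hj
    simp only [Finset.mem_singleton] at hj
    subst hj
    exact Finset.mem_insert_self _ _
  have hmap : ∀ x ∈ S, repJ J' x ∈ S.image (repJ J') := fun x hx => Finset.mem_image_of_mem _ hx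
  rw [← Finset.sum_fiberwise_of_maps_to hmap]
  have hcard : (S.card : ℝ) = ∑ r ∈ S.image (repJ J'),
      ((S.filter (fun x => repJ J' x = r)).card : ℝ) := by
    rw [← Nat.cast_sum]
    exact_mod_cast congrArg (Nat.cast (R := ℝ)) (Finset.card_eq_sum_card_fiberwise hmap)
  rw [hcard]
  apply Finset.sum_le_sum
  intro r hr
  set Φ := S.filter (fun x => repJ J' x = r) with hΦ
  have hΦsub : Φ ⊆ S := Finset.filter_subset _ _
  have hW : ∀ x ∈ Φ, cntJ S J' x = Φ.card := by
    intro x hx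
    have hrx : repJ J' x = r := (Finset.mem_filter.1 hx).2
    unfold cntJ
    congr 1
    apply Finset.filter_congr
    intro y _
    rw [hrx]
  have hfib : ∀ x ∈ Φ, ∀ y ∈ S, (repJ J y = repJ J x ∨ repJ {i₀} y = repJ {i₀} x) → y ∈ Φ := by
    intro x hx y hyS hcase
    have hrx : repJ J' x = r := (Finset.mem_filter.1 hx).2
    have : repJ J' y = repJ J' x := by
      rcases hcase with h | h
      · exact repJ_trans_subset hJsub h
      · exact repJ_trans_subset hisub h
    exact Finset.mem_filter.2 ⟨hyS, by rw [this, hrx]⟩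
  have hkey : ∑ x ∈ Φ, cntJ S J x * cntJ S {i₀} x ≤ Φ.card ^ 2 :=
    sum_mul_cnt_le hi₀ Φ hfib
  calc ∑ x ∈ Φ, ((cntJ S J x : ℝ) * cntJ S {i₀} x / cntJ S J' x)
      = ∑ x ∈ Φ, ((cntJ S J x : ℝ) * cntJ S {i₀} x) / (Φ.card : ℝ) := by
        refine Finset.sum_congr rfl (fun x hx => ?_)
        rw [hW x hx]
    _ = (∑ x ∈ Φ, (cntJ S J x : ℝ) * cntJ S {i₀} x) / (Φ.card : ℝ) := by
        rw [Finset.sum_div]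
    _ ≤ (Φ.card : ℝ) := by
        rcases Nat.eq_zero_or_pos Φ.card with h0 | hpos
        · have : Φ = ∅ := Finset.card_eq_zero.1 h0
          simp [this]
        · rw [div_le_iff₀ (by exact_mod_cast hpos)]
          have : (∑ x ∈ Φ, (cntJ S J x : ℝ) * cntJ S {i₀} x) = ((∑ x ∈ Φ, cntJ S J x * cntJ S {i₀} x : ℕ) : ℝ) := by
            push_cast; rfl
          rw [this]
          calc ((∑ x ∈ Φ, cntJ S J x * cntJ S {i₀} x : ℕ) : ℝ) ≤ ((Φ.card ^ 2 : ℕ) : ℝ) := by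
                exact_mod_cast hkey
            _ = (Φ.card : ℝ) * Φ.card := by push_cast; ring

lemma T1gen (S : Finset (V L n)) (J : Finset (Fin n)) :
    ∑ i ∈ J, ∑ x ∈ S, Real.log (cntJ S {i} x) ≤ ∑ x ∈ S, Real.log (cntJ S J x) := by
  classical
  induction J using Finset.induction_on with
  | empty =>
    simp only [Finset.sum_empty]
    rw [Finset.sum_congr rfl (fun x hx => by rw [cntJ_empty hx])]
    simp
  | @insert i₀ J hi₀ ih =>
    rw [Finset.sum_insert hi₀]
    have step : ∑ x ∈ S, Real.log (cntJ S {i₀} x) + ∑ x ∈ S, Real.log (cntJ S J x)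
        ≤ ∑ x ∈ S, Real.log (cntJ S (insert i₀ J) x) := by
      have hineq : ∑ x ∈ S, (Real.log (cntJ S {i₀} x) + Real.log (cntJ S J x)
          - Real.log (cntJ S (insert i₀ J) x)) ≤ 0 := by
        have hptwise : ∀ x ∈ S, Real.log (cntJ S {i₀} x) + Real.log (cntJ S J x)
            - Real.log (cntJ S (insert i₀ J) x)
            ≤ (cntJ S J x : ℝ) * cntJ S {i₀} x / cntJ S (insert i₀ J) x - 1 := by
          intro x hx
          have hA : (0:ℝ) < cntJ S J x := by exact_mod_cast cntJ_pos hx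
          have hB : (0:ℝ) < cntJ S {i₀} x := by exact_mod_cast cntJ_pos hx
          have hW : (0:ℝ) < cntJ S (insert i₀ J) x := by exact_mod_cast cntJ_pos hx
          have hlog : Real.log (cntJ S {i₀} x) + Real.log (cntJ S J x)
              - Real.log (cntJ S (insert i₀ J) x)
              = Real.log ((cntJ S J x : ℝ) * cntJ S {i₀} x / cntJ S (insert i₀ J) x) := by
            rw [Real.log_div (by positivity) (ne_of_gt hW), Real.log_mul (ne_of_gt hA) (ne_of_gt hB)]
            ring
          rw [hlog]
          exact Real.log_le_sub_one_of_pos (by positivity)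
        calc ∑ x ∈ S, (Real.log (cntJ S {i₀} x) + Real.log (cntJ S J x)
              - Real.log (cntJ S (insert i₀ J) x))
            ≤ ∑ x ∈ S, ((cntJ S J x : ℝ) * cntJ S {i₀} x / cntJ S (insert i₀ J) x - 1) :=
              Finset.sum_le_sum hptwise
          _ = (∑ x ∈ S, (cntJ S J x : ℝ) * cntJ S {i₀} x / cntJ S (insert i₀ J) x) - S.card := by
              rw [Finset.sum_sub_distrib]
              simp
          _ ≤ 0 := by
              have := gibbs (S := S) hi₀
              linarith
      have expand : ∑ x ∈ S, (Real.log (cntJ S {i₀} x) + Real.log (cntJ S J x)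
          - Real.log (cntJ S (insert i₀ J) x))
          = ∑ x ∈ S, Real.log (cntJ S {i₀} x) + ∑ x ∈ S, Real.log (cntJ S J x)
            - ∑ x ∈ S, Real.log (cntJ S (insert i₀ J) x) := by
        rw [Finset.sum_sub_distrib, Finset.sum_add_distrib]
      linarith [expand ▸ hineq]
    linarith [ih]

theorem T1 (S : Finset (V L n)) :
    ∑ i : Fin n, ∑ x ∈ S, Real.log (cntJ S {i} x) ≤ S.card * Real.log S.card := by
  classical
  have := T1gen S univ
  calc ∑ i : Fin n, ∑ x ∈ S, Real.log (cntJ S {i} x)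
      ≤ ∑ x ∈ S, Real.log (cntJ S univ x) := this
    _ = S.card * Real.log S.card := by
        rw [Finset.sum_congr rfl (fun x _ => by rw [cntJ_univ (S := S) (x := x)])]
        rw [Finset.sum_const, nsmul_eq_mul]

/-! ## Boundary and the entropy bound -/

/-- The (directed) edge boundary of `S`: number of ordered adjacent pairs `(x,y)` with
`x ∈ S`, `y ∉ S`. Expressed as a sum over directions and points. -/
def bdry (S : Finset (V L n)) : ℕ := ∑ i : Fin n, ∑ x ∈ S, (L - cntJ S {i} x)

lemma cnt_compl (S : Finset (V L n)) (i : Fin n) (x : V L n) :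
    cntJ Sᶜ {i} x + cntJ S {i} x = L := by
  classical
  have hsplit : (Sᶜ.filter (fun y => repJ {i} y = repJ {i} x)) ∪
      (S.filter (fun y => repJ {i} y = repJ {i} x))
      = (univ : Finset (V L n)).filter (fun y => repJ {i} y = repJ {i} x) := by
    rw [← Finset.filter_union]
    congr 1
    ext y
    simp only [Finset.mem_union, Finset.mem_compl, Finset.mem_univ, iff_true]
    tauto
  have hdisj : Disjoint (Sᶜ.filter (fun y => repJ {i} y = repJ {i} x))
      (S.filter (fun y => repJ {i} y = repJ {i} x)) :=
    Finset.disjoint_filter_filter disjoint_compl_left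
  have := Finset.card_union_of_disjoint hdisj
  rw [hsplit, card_fiber_univ] at this
  exact this.symm

lemma cnt_compl' (S : Finset (V L n)) (i : Fin n) (x : V L n) :
    L - cntJ S {i} x = cntJ Sᶜ {i} x := by
  have := cnt_compl S i x
  omega

lemma bdry_eq_sum_compl (S : Finset (V L n)) :
    bdry S = ∑ i : Fin n, ∑ x ∈ S, cntJ Sᶜ {i} x := by
  unfold bdry
  refine Finset.sum_congr rfl (fun i _ => Finset.sum_congr rfl (fun x _ => cnt_compl' S i x))

lemma sum_cnt_swap (S T : Finset (V L n)) (i : Fin n) :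
    ∑ x ∈ S, cntJ T {i} x = ∑ y ∈ T, cntJ S {i} y := by
  classical
  unfold cntJ
  have h1 : ∀ x, (T.filter (fun y => repJ {i} y = repJ {i} x)).card
      = ∑ y ∈ T, if repJ {i} y = repJ {i} x then 1 else 0 := fun x => Finset.card_filter _ _
  have h2 : ∀ y, (S.filter (fun x => repJ {i} x = repJ {i} y)).card
      = ∑ x ∈ S, if repJ {i} x = repJ {i} y then 1 else 0 := fun y => Finset.card_filter _ _
  simp only [h1, h2]
  rw [Finset.sum_comm]
  refine Finset.sum_congr rfl (fun y _ => Finset.sum_congr rfl (fun x _ => ?_))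
  congr 1
  · simp [eq_comm]

lemma bdry_compl (S : Finset (V L n)) : bdry S = bdry Sᶜ := by
  rw [bdry_eq_sum_compl, bdry_eq_sum_compl]
  refine Finset.sum_congr rfl (fun i _ => ?_)
  rw [sum_cnt_swap]
  simp [compl_compl]

/-- Concavity of `log`: secant slope comparison. -/
lemma log_secant {a b : ℝ} (h1 : 1 ≤ a) (hab : a ≤ b) :
    (a - 1) * Real.log b ≤ (b - 1) * Real.log a := by
  rcases eq_or_lt_of_le h1 with rfl | h1'
  · norm_num
  rcases eq_or_lt_of_le hab with rfl | hab'
  · exact le_refl _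
  have hb1 : (1:ℝ) < b := lt_trans h1' hab'
  have hcc := strictConcaveOn_log_Ioi.concaveOn
  set lam := (b - a) / (b - 1) with hlam
  set mu := (a - 1) / (b - 1) with hmu
  have hb1' : (0:ℝ) < b - 1 := by linarith
  have hlam0 : 0 ≤ lam := by
    apply div_nonneg <;> linarith
  have hmu0 : 0 ≤ mu := by
    apply div_nonneg <;> linarith
  have hsum : lam + mu = 1 := by
    rw [hlam, hmu, ← add_div, div_eq_one_iff_eq (ne_of_gt hb1')]
    ring
  have hcomb : lam • (1:ℝ) + mu • b = a := by
    simp only [smul_eq_mul, hlam, hmu]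
    field_simp <;> ring
  have := hcc.2 (Set.mem_Ioi.2 one_pos) (Set.mem_Ioi.2 (by linarith : (0:ℝ) < b))
    hlam0 hmu0 hsum
  rw [hcomb] at this
  simp only [Real.log_one, smul_eq_mul, mul_zero, zero_add] at this
  have h2 : mu * Real.log b ≤ Real.log a := this
  have h3 : (b - 1) * (mu * Real.log b) ≤ (b - 1) * Real.log a :=
    mul_le_mul_of_nonneg_left h2 (le_of_lt hb1')
  calc (a - 1) * Real.log b = (b - 1) * (mu * Real.log b) := by
        rw [hmu]; field_simp <;> ring
    _ ≤ (b - 1) * Real.log a := h3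

/-- Pointwise inequality: `(L - a) log L ≥ (L-1) (log L - log a)` for `1 ≤ a ≤ L`. -/
lemma pointwise_PP {a : ℕ} (hL : 2 ≤ L) (ha1 : 1 ≤ a) (haL : a ≤ L) :
    ((L:ℝ) - 1) * (Real.log L - Real.log a) ≤ ((L:ℝ) - (a:ℝ)) * Real.log L := by
  have h := log_secant (a := (a:ℝ)) (b := (L:ℝ)) (by exact_mod_cast ha1) (by exact_mod_cast haL)
  nlinarith [h]

/-- The entropy isoperimetric inequality (edge version):
`bdry S * log L ≥ (L-1) * |S| * (log (L^n) - log |S|)`. -/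
theorem T2 (S : Finset (V L n)) (hL : 2 ≤ L) :
    ((L:ℝ) - 1) * ((S.card : ℝ) * ((n:ℝ) * Real.log L - Real.log S.card))
      ≤ (bdry S : ℝ) * Real.log L := by
  classical
  have hcast : (bdry S : ℝ) = ∑ i : Fin n, ∑ x ∈ S, ((L:ℝ) - (cntJ S {i} x : ℝ)) := by
    unfold bdry
    push_cast [Nat.cast_sub (cntJ_single_le S _ _)]
    rfl
  have hstep1 : ∑ i : Fin n, ∑ x ∈ S, ((L:ℝ) - 1) * (Real.log L - Real.log (cntJ S {i} x))
      ≤ (bdry S : ℝ) * Real.log L := by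
    rw [hcast, Finset.sum_mul]
    apply Finset.sum_le_sum
    intro i _
    rw [Finset.sum_mul]
    apply Finset.sum_le_sum
    intro x hx
    exact pointwise_PP hL (cntJ_pos hx) (cntJ_single_le S i x)
  have hstep2 : ((L:ℝ) - 1) * ((S.card : ℝ) * ((n:ℝ) * Real.log L - Real.log S.card))
      ≤ ∑ i : Fin n, ∑ x ∈ S, ((L:ℝ) - 1) * (Real.log L - Real.log (cntJ S {i} x)) := by
    have hT1 := T1 S
    have hL1 : (0:ℝ) ≤ (L:ℝ) - 1 := by
      have : (2:ℝ) ≤ (L:ℝ) := by exact_mod_cast hL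
      linarith
    have inner : ∀ i : Fin n, ∑ x ∈ S, ((L:ℝ) - 1) * (Real.log L - Real.log (cntJ S {i} x))
        = (S.card : ℝ) * (((L:ℝ) - 1) * Real.log L)
          - ((L:ℝ) - 1) * ∑ x ∈ S, Real.log (cntJ S {i} x) := by
      intro i
      have hper : ∀ x ∈ S, ((L:ℝ) - 1) * (Real.log L - Real.log (cntJ S {i} x))
          = ((L:ℝ) - 1) * Real.log L - ((L:ℝ) - 1) * Real.log (cntJ S {i} x) :=
        fun x _ => by ring
      rw [Finset.sum_congr rfl hper, Finset.sum_sub_distrib, Finset.sum_const, nsmul_eq_mul,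
        Finset.mul_sum]
    have outer : ∑ i : Fin n, ∑ x ∈ S, ((L:ℝ) - 1) * (Real.log L - Real.log (cntJ S {i} x))
        = (n:ℝ) * ((S.card : ℝ) * (((L:ℝ) - 1) * Real.log L))
          - ((L:ℝ) - 1) * ∑ i : Fin n, ∑ x ∈ S, Real.log (cntJ S {i} x) := by
      rw [Finset.sum_congr rfl (fun i _ => inner i), Finset.sum_sub_distrib, Finset.sum_const,
        Finset.card_univ, Fintype.card_fin, nsmul_eq_mul, ← Finset.mul_sum]
    rw [outer]
    have hmul : ((L:ℝ) - 1) * (∑ i : Fin n, ∑ x ∈ S, Real.log (cntJ S {i} x))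
        ≤ ((L:ℝ) - 1) * ((S.card : ℝ) * Real.log S.card) :=
      mul_le_mul_of_nonneg_left hT1 hL1
    nlinarith [hmul]
  linarith

/-! ## Numerics -/

section Numeric

lemma concaveOn_entropy (K : ℝ) :
    ConcaveOn ℝ (Set.Ici (0:ℝ)) (fun y => K * y + Real.negMulLog y) := by
  have hlin : ConcaveOn ℝ (Set.Ici (0:ℝ)) (fun y => K * y) :=
    ⟨convex_Ici 0, fun x _ y _ p q _ _ _ => le_of_eq (by simp only [smul_eq_mul]; ring)⟩
  exact hlin.add Real.concaveOn_negMulLog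

lemma entropy_fun_eq (K y : ℝ) : K * y + Real.negMulLog y = y * (K - Real.log y) := by
  rw [Real.negMulLog]; ring

lemma concave_min_endpoints {K a b x : ℝ} (ha : 0 ≤ a) (hax : a ≤ x) (hxb : x ≤ b) :
    min (a * (K - Real.log a)) (b * (K - Real.log b)) ≤ x * (K - Real.log x) := by
  rcases eq_or_lt_of_le (le_trans hax hxb) with rfl | hab
  · have : x = a := le_antisymm hxb hax
    subst this
    exact min_le_left _ _
  have hf := concaveOn_entropy K
  set p := (b - x) / (b - a) with hp
  set q := (x - a) / (b - a) with hq
  have hba : (0:ℝ) < b - a := by linarith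
  have hp0 : 0 ≤ p := by apply div_nonneg <;> linarith
  have hq0 : 0 ≤ q := by apply div_nonneg <;> linarith
  have hpq : p + q = 1 := by
    rw [hp, hq, ← add_div, div_eq_one_iff_eq (ne_of_gt hba)]; ring
  have hcomb : p • a + q • b = x := by
    simp only [smul_eq_mul, hp, hq]
    field_simp
    ring
  have h2 := hf.2 (Set.mem_Ici.2 ha) (Set.mem_Ici.2 (by linarith : (0:ℝ) ≤ b)) hp0 hq0 hpq
  rw [hcomb] at h2
  simp only [smul_eq_mul] at h2
  rw [entropy_fun_eq, entropy_fun_eq, entropy_fun_eq] at h2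
  have hmin1 : min (a * (K - Real.log a)) (b * (K - Real.log b)) ≤ a * (K - Real.log a) :=
    min_le_left _ _
  have hmin2 : min (a * (K - Real.log a)) (b * (K - Real.log b)) ≤ b * (K - Real.log b) :=
    min_le_right _ _
  have e1 : p * (a * (K - Real.log a) ⊓ b * (K - Real.log b)) ≤ p * (a * (K - Real.log a)) :=
    mul_le_mul_of_nonneg_left hmin1 hp0
  have e2 : q * (a * (K - Real.log a) ⊓ b * (K - Real.log b)) ≤ q * (b * (K - Real.log b)) :=
    mul_le_mul_of_nonneg_left hmin2 hq0
  have e3 : p * (a * (K - Real.log a) ⊓ b * (K - Real.log b))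
      + q * (a * (K - Real.log a) ⊓ b * (K - Real.log b))
      = (a * (K - Real.log a) ⊓ b * (K - Real.log b)) := by
    rw [← add_mul, hpq, one_mul]
  linarith

lemma sq_le_two_pow {m : ℕ} (hm : 4 ≤ m) : m ^ 2 ≤ 2 ^ m := by
  induction m, hm using Nat.le_induction with
  | base => norm_num
  | succ m hm ih =>
    have h1 : (m + 1) ^ 2 ≤ 2 * m ^ 2 := by nlinarith
    calc (m + 1) ^ 2 ≤ 2 * m ^ 2 := h1
      _ ≤ 2 * 2 ^ m := by omega
      _ = 2 ^ (m + 1) := by rw [pow_succ]; ring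

lemma two_mul_le_two_pow {k : ℕ} (hk : 2 ≤ k) : 2 * k ≤ 2 ^ k := by
  induction k, hk using Nat.le_induction with
  | base => norm_num
  | succ k hk ih =>
    have : 2 ^ k ≥ 2 := by
      calc 2 ^ k ≥ 2 ^ 2 := Nat.pow_le_pow_right (by norm_num) hk
        _ ≥ 2 := by norm_num
    calc 2 * (k + 1) = 2 * k + 2 := by ring
      _ ≤ 2 ^ k + 2 ^ k := by omega
      _ = 2 ^ (k + 1) := by rw [pow_succ]; ring

lemma four_mul_le_three_pow {k : ℕ} (hk : 2 ≤ k) : 4 * k ≤ 3 ^ k := by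
  induction k, hk using Nat.le_induction with
  | base => norm_num
  | succ k hk ih =>
    have : 3 ^ k ≥ 4 := by
      calc 3 ^ k ≥ 3 ^ 2 := Nat.pow_le_pow_right (by norm_num) hk
        _ ≥ 4 := by norm_num
    calc 4 * (k + 1) = 4 * k + 4 := by ring
      _ ≤ 3 ^ k + 4 := by omega
      _ ≤ 3 ^ k + 2 * 3 ^ k := by omega
      _ = 3 ^ (k + 1) := by rw [pow_succ]; ring

lemma npow_ineq {Lv k : ℕ} (hL : 2 ≤ Lv) (hk : 1 ≤ k) (hbranch : 2 ≤ k ∨ Lv ≠ 3) :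
    Lv ^ (2 * k) ≤ 2 ^ (Lv ^ k) := by
  rcases Nat.lt_or_ge k 2 with hk2 | hk2
  · -- k = 1
    have hk1 : k = 1 := by omega
    subst hk1
    have hLne3 : Lv ≠ 3 := by
      rcases hbranch with h | h
      · omega
      · exact h
    rcases Nat.lt_or_ge Lv 4 with hL4 | hL4
    · have : Lv = 2 := by omega
      subst this; norm_num
    · have := sq_le_two_pow hL4
      simpa [mul_comm, pow_one] using this
  · -- k ≥ 2
    rcases Nat.lt_or_ge Lv 4 with hL4 | hL4
    · rcases Nat.lt_or_ge Lv 3 with hL3 | hL3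
      · have : Lv = 2 := by omega
        subst this
        calc (2:ℕ) ^ (2 * k) ≤ 2 ^ (2 ^ k) :=
          Nat.pow_le_pow_right (by norm_num) (two_mul_le_two_pow hk2)
        _ = 2 ^ (2 ^ k) := rfl
      · have : Lv = 3 := by omega
        subst this
        calc (3:ℕ) ^ (2 * k) = 9 ^ k := by rw [pow_mul]; norm_num
          _ ≤ 16 ^ k := Nat.pow_le_pow_left (by norm_num) k
          _ = 2 ^ (4 * k) := by rw [pow_mul]; norm_num
          _ ≤ 2 ^ (3 ^ k) := Nat.pow_le_pow_right (by norm_num) (four_mul_le_three_pow hk2)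
    · have h1 : Lv ^ (2 * k) = (Lv ^ 2) ^ k := by rw [← pow_mul, mul_comm]
      have h2 : (Lv ^ 2) ^ k ≤ (2 ^ Lv) ^ k := Nat.pow_le_pow_left (sq_le_two_pow hL4) k
      have h3 : (2 ^ Lv : ℕ) ^ k = 2 ^ (Lv * k) := by rw [← pow_mul]
      have h4 : Lv * k ≤ Lv ^ k := by
        have hk1 : k ≤ Lv ^ (k - 1) := by
          have : k - 1 < 2 ^ (k - 1) := Nat.lt_two_pow_self
          have h2L : (2:ℕ) ^ (k - 1) ≤ Lv ^ (k - 1) := Nat.pow_le_pow_left hL _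
          omega
        calc Lv * k ≤ Lv * Lv ^ (k - 1) := Nat.mul_le_mul_left _ hk1
          _ = Lv ^ (k - 1 + 1) := by rw [pow_succ]; ring
          _ = Lv ^ k := by congr 1; omega
      calc Lv ^ (2 * k) = (Lv ^ 2) ^ k := h1
        _ ≤ 2 ^ (Lv * k) := by rw [← h3]; exact h2
        _ ≤ 2 ^ (Lv ^ k) := Nat.pow_le_pow_right (by norm_num) h4

/-- The key real inequality for the main branch. -/
lemma numeric1 {Lv n t μ : ℕ} (hL : 2 ≤ Lv) (htn : t + 1 ≤ n) (hμ1 : Lv ^ t ≤ μ)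
    (hμ2 : 2 * μ ≤ Lv ^ n) (hbranch : t + 2 ≤ n ∨ Lv ≠ 3) :
    ((n - t : ℕ) : ℝ) * (Lv:ℝ) ^ t * Real.log Lv ≤ (μ:ℝ) * ((n:ℝ) * Real.log Lv - Real.log μ) := by
  have hLr : (2:ℝ) ≤ (Lv:ℝ) := by exact_mod_cast hL
  have hlogL : 0 < Real.log Lv := Real.log_pos (by linarith)
  set K : ℝ := (n:ℝ) * Real.log Lv with hK
  set a : ℝ := (Lv:ℝ) ^ t with haa
  set b : ℝ := (Lv:ℝ) ^ n / 2 with hbb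
  have ha0 : (0:ℝ) < a := by positivity
  have hax : a ≤ (μ:ℝ) := by
    rw [haa]
    exact_mod_cast hμ1
  have hxb : (μ:ℝ) ≤ b := by
    rw [hbb]
    rw [le_div_iff₀ (by norm_num : (0:ℝ) < 2)]
    calc (μ:ℝ) * 2 = ((2 * μ : ℕ) : ℝ) := by push_cast; ring
      _ ≤ ((Lv ^ n : ℕ) : ℝ) := by exact_mod_cast hμ2
      _ = (Lv:ℝ) ^ n := by push_cast; ring
  set k := n - t with hkk
  have hk1 : 1 ≤ k := by omega
  have hbranch' : 2 ≤ k ∨ Lv ≠ 3 := by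
    rcases hbranch with h | h
    · left; omega
    · right; exact h
  -- endpoint values
  have hfa : a * (K - Real.log a) = (k:ℝ) * (Lv:ℝ) ^ t * Real.log Lv := by
    rw [haa, hK, Real.log_pow]
    have : (n:ℝ) * Real.log Lv - (t:ℝ) * Real.log Lv = (k:ℝ) * Real.log Lv := by
      rw [hkk]
      have : ((n - t : ℕ) : ℝ) = (n:ℝ) - (t:ℝ) := by
        have : t ≤ n := by omega
        push_cast [this]; ring
      rw [this]; ring
    rw [this]; ring
  have hfb : (k:ℝ) * (Lv:ℝ) ^ t * Real.log Lv ≤ b * (K - Real.log b) := by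
    have hlogb : Real.log b = (n:ℝ) * Real.log Lv - Real.log 2 := by
      rw [hbb, Real.log_div (by positivity) (by norm_num), Real.log_pow]
    rw [hlogb, hK]
    have hexp : b * ((n:ℝ) * Real.log Lv - ((n:ℝ) * Real.log Lv - Real.log 2)) = b * Real.log 2 := by
      ring
    rw [hexp]
    -- b * log 2 = (Lv^n/2) log 2 ≥ k * Lv^t * log Lv
    have hnp := npow_ineq hL hk1 hbranch'
    have hlogs : (2 * k : ℝ) * Real.log Lv ≤ ((Lv:ℝ) ^ k) * Real.log 2 := by
      have h1 : Real.log ((Lv:ℝ) ^ (2 * k)) ≤ Real.log ((2:ℝ) ^ (Lv ^ k)) := by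
        apply Real.log_le_log (by positivity)
        exact_mod_cast hnp
      rw [Real.log_pow, Real.log_pow] at h1
      push_cast at h1 ⊢
      exact_mod_cast h1
    have hbeq : b = (Lv:ℝ) ^ t * (Lv:ℝ) ^ k / 2 := by
      rw [hbb, ← pow_add]
      congr 2
      omega
    rw [hbeq]
    have ht0 : (0:ℝ) < (Lv:ℝ) ^ t := by positivity
    calc (k:ℝ) * (Lv:ℝ) ^ t * Real.log Lv
        = ((Lv:ℝ) ^ t / 2) * ((2 * k : ℝ) * Real.log Lv) := by ring
      _ ≤ ((Lv:ℝ) ^ t / 2) * (((Lv:ℝ) ^ k) * Real.log 2) := by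
          apply mul_le_mul_of_nonneg_left hlogs (by positivity)
      _ = (Lv:ℝ) ^ t * (Lv:ℝ) ^ k / 2 * Real.log 2 := by ring
  have hmin := concave_min_endpoints (K := K) (le_of_lt ha0) hax hxb
  rw [hK] at hmin
  calc ((n - t : ℕ) : ℝ) * (Lv:ℝ) ^ t * Real.log Lv
      = (k:ℝ) * (Lv:ℝ) ^ t * Real.log Lv := by rw [hkk]
    _ ≤ min (a * (K - Real.log a)) (b * (K - Real.log b)) := le_min (le_of_eq hfa.symm) hfb
    _ ≤ (μ:ℝ) * ((n:ℝ) * Real.log Lv - Real.log μ) := hmin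

end Numeric

/-! ## The case L = 3, t = n-1 -/

lemma repJ_idem (J : Finset (Fin n)) (x : V L n) : repJ J (repJ J x) = repJ J x := by
  funext j; by_cases hj : j ∈ J <;> simp [repJ, hj]

lemma cnt_fiber_const (S : Finset (V L n)) {i : Fin n} {x r : V L n} (h : repJ {i} x = r) :
    cntJ S {i} x = (S.filter (fun y => repJ {i} y = r)).card := by
  unfold cntJ; rw [h]

lemma bdry_cast (S : Finset (V L n)) :
    (bdry S : ℝ) = ∑ i : Fin n, ∑ x ∈ S, ((L:ℝ) - (cntJ S {i} x : ℝ)) := by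
  unfold bdry
  push_cast [Nat.cast_sub (cntJ_single_le S _ _)]
  rfl

lemma line_identity_three (S : Finset (V 3 n)) :
    (3 * Real.log 3 - 2 * Real.log 2) * (bdry S : ℝ)
      = 2 * ((∑ i : Fin n, ∑ x ∈ S, (Real.log 3 - Real.log (cntJ S {i} x)))
           + (∑ i : Fin n, ∑ x ∈ Sᶜ, (Real.log 3 - Real.log (cntJ Sᶜ {i} x)))) := by
  classical
  set K : ℝ := 3 * Real.log 3 - 2 * Real.log 2 with hKdef
  have key : ∀ i : Fin n,
      K * (∑ x ∈ S, ((3:ℝ) - (cntJ S {i} x : ℝ)))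
        = 2 * ((∑ x ∈ S, (Real.log 3 - Real.log (cntJ S {i} x)))
             + (∑ x ∈ Sᶜ, (Real.log 3 - Real.log (cntJ Sᶜ {i} x)))) := by
    intro i
    set g : V 3 n → ℝ := fun x =>
      if x ∈ S then K * ((3:ℝ) - (cntJ S {i} x : ℝ)) - 2 * (Real.log 3 - Real.log (cntJ S {i} x))
      else -(2 * (Real.log 3 - Real.log (cntJ Sᶜ {i} x))) with hg
    have hzero : ∑ x : V 3 n, g x = 0 := by
      have hmap : ∀ x ∈ (univ : Finset (V 3 n)), repJ {i} x ∈ univ.image (repJ {i}) :=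
        fun x hx => Finset.mem_image_of_mem _ hx
      rw [← Finset.sum_fiberwise_of_maps_to hmap]
      apply Finset.sum_eq_zero
      intro r hr
      obtain ⟨x₀, -, hx₀⟩ := Finset.mem_image.1 hr
      set Φ := (univ : Finset (V 3 n)).filter (fun x => repJ {i} x = r) with hΦ
      set a := (S.filter (fun y => repJ {i} y = r)).card with ha
      have hΦcard : Φ.card = 3 := by
        rw [hΦ, ← hx₀]
        exact card_fiber_univ i x₀
      have haS : (Φ.filter (fun x => x ∈ S)).card = a := by
        rw [ha]
        congr 1
        ext y
        simp only [hΦ, Finset.mem_filter, Finset.mem_univ, true_and]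
        tauto
      have hsplitc : (Φ.filter (fun x => x ∈ S)).card + (Φ.filter (fun x => ¬ x ∈ S)).card = 3 := by
        rw [Finset.card_filter_add_card_filter_not, hΦcard]
      have haSc : (Φ.filter (fun x => ¬ x ∈ S)).card = 3 - a := by omega
      have ha3 : a ≤ 3 := by omega
      have hcntS : ∀ x ∈ Φ, cntJ S {i} x = a := by
        intro x hx
        exact cnt_fiber_const S ((Finset.mem_filter.1 hx).2)
      have hcntSc : ∀ x ∈ Φ, cntJ Sᶜ {i} x = 3 - a := by
        intro x hx
        have h1 := cnt_compl S i x
        have h2 := hcntS x hx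
        omega
      -- split the fiber sum
      rw [← Finset.sum_filter_add_sum_filter_not Φ (fun x => x ∈ S)]
      have hS1 : ∑ x ∈ Φ.filter (fun x => x ∈ S), g x
          = (a:ℝ) * (K * ((3:ℝ) - (a:ℝ)) - 2 * (Real.log 3 - Real.log (a:ℝ))) := by
        rw [Finset.sum_congr rfl (fun x hx => ?_), Finset.sum_const, haS, nsmul_eq_mul]
        have hxΦ : x ∈ Φ := Finset.mem_of_mem_filter _ hx
        have hxS : x ∈ S := (Finset.mem_filter.1 hx).2
        rw [hg]
        simp only [hxS, if_true]
        rw [hcntS x hxΦ]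
      have hS2 : ∑ x ∈ Φ.filter (fun x => ¬ x ∈ S), g x
          = ((3 - a : ℕ):ℝ) * (-(2 * (Real.log 3 - Real.log ((3 - a : ℕ):ℝ)))) := by
        rw [Finset.sum_congr rfl (fun x hx => ?_), Finset.sum_const, haSc, nsmul_eq_mul]
        have hxΦ : x ∈ Φ := Finset.mem_of_mem_filter _ hx
        have hxS : ¬ x ∈ S := (Finset.mem_filter.1 hx).2
        rw [hg]
        simp only [hxS, if_false]
        rw [hcntSc x hxΦ]
      rw [hS1, hS2]
      interval_cases a
      · norm_num
      · have : ((3:ℕ) - 1) = 2 := by norm_num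
        rw [this]
        push_cast
        rw [hKdef]
        simp [Real.log_one]
        ring
      · have : ((3:ℕ) - 2) = 1 := by norm_num
        rw [this]
        push_cast
        rw [hKdef]
        simp [Real.log_one]
        ring
      · have : ((3:ℕ) - 3) = 0 := by norm_num
        rw [this]
        push_cast
        simp
    -- now split univ sum into S and Sᶜ
    have hsplit := Finset.sum_add_sum_compl S g
    have hgS : ∑ x ∈ S, g x = K * (∑ x ∈ S, ((3:ℝ) - (cntJ S {i} x : ℝ)))
        - 2 * (∑ x ∈ S, (Real.log 3 - Real.log (cntJ S {i} x))) := by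
      rw [Finset.mul_sum, Finset.mul_sum, ← Finset.sum_sub_distrib]
      refine Finset.sum_congr rfl (fun x hx => ?_)
      rw [hg]
      simp only [hx, if_true]
    have hgSc : ∑ x ∈ Sᶜ, g x = - (2 * (∑ x ∈ Sᶜ, (Real.log 3 - Real.log (cntJ Sᶜ {i} x)))) := by
      rw [Finset.mul_sum, ← Finset.sum_neg_distrib]
      refine Finset.sum_congr rfl (fun x hx => ?_)
      rw [hg]
      have hxS : ¬ x ∈ S := by
        intro hc
        exact (Finset.mem_compl.1 hx) hc
      simp only [hxS, if_false]
    rw [hgS, hgSc] at hsplit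
    rw [hzero] at hsplit
    linarith
  rw [bdry_cast, Finset.mul_sum]
  push_cast
  rw [Finset.sum_congr rfl (fun i _ => key i)]
  rw [← Finset.mul_sum, Finset.sum_add_distrib]

lemma xlogx_pair_le {A x T : ℝ} (hA : 0 ≤ A) (h1 : A ≤ x) (h2 : x ≤ T - A) :
    x * Real.log x + (T - x) * Real.log (T - x)
      ≤ A * Real.log A + (T - A) * Real.log (T - A) := by
  rcases eq_or_lt_of_le (le_trans h1 h2) with heq | hlt
  · have : x = A := le_antisymm (heq ▸ h2) h1
    subst this
    exact le_of_eq rfl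
  set p := ((T - A) - x) / ((T - A) - A) with hp
  set q := (x - A) / ((T - A) - A) with hq
  have hd : (0:ℝ) < (T - A) - A := by linarith
  have hp0 : 0 ≤ p := by apply div_nonneg <;> linarith
  have hq0 : 0 ≤ q := by apply div_nonneg <;> linarith
  have hpq : p + q = 1 := by
    rw [hp, hq, ← add_div, div_eq_one_iff_eq (ne_of_gt hd)]; ring
  have hcomb1 : p • A + q • (T - A) = x := by
    simp only [smul_eq_mul, hp, hq]
    field_simp
    ring
  have hcomb2 : p • (T - A) + q • A = T - x := by
    simp only [smul_eq_mul, hp, hq]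
    field_simp
    ring
  have hc := Real.convexOn_mul_log
  have hmem1 : A ∈ Set.Ici (0:ℝ) := Set.mem_Ici.2 hA
  have hmem2 : (T - A) ∈ Set.Ici (0:ℝ) := Set.mem_Ici.2 (by linarith)
  have e1 := hc.2 hmem1 hmem2 hp0 hq0 hpq
  rw [hcomb1] at e1
  have e2 := hc.2 hmem2 hmem1 hp0 hq0 hpq
  rw [hcomb2] at e2
  simp only [smul_eq_mul] at e1 e2
  have h3 : p * (A * Real.log A) + q * (A * Real.log A) = A * Real.log A := by
    rw [← add_mul, hpq, one_mul]
  have h4 : p * ((T - A) * Real.log (T - A)) + q * ((T - A) * Real.log (T - A))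
      = (T - A) * Real.log (T - A) := by
    rw [← add_mul, hpq, one_mul]
  linarith

lemma fincard_V (L n : ℕ) : Fintype.card (V L n) = L ^ n := by
  rw [Fintype.card_fun, Fintype.card_fin, Fintype.card_fin]

lemma slack_lower (S : Finset (V L n)) :
    (n:ℝ) * S.card * Real.log L - S.card * Real.log S.card
      ≤ ∑ i : Fin n, ∑ x ∈ S, (Real.log L - Real.log (cntJ S {i} x)) := by
  have hinner : ∀ i : Fin n, ∑ x ∈ S, (Real.log L - Real.log (cntJ S {i} x))
      = (S.card : ℝ) * Real.log L - ∑ x ∈ S, Real.log (cntJ S {i} x) := by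
    intro i
    rw [Finset.sum_sub_distrib, Finset.sum_const, nsmul_eq_mul]
  have hexp : ∑ i : Fin n, ∑ x ∈ S, (Real.log L - Real.log (cntJ S {i} x))
      = (n:ℝ) * ((S.card : ℝ) * Real.log L) - ∑ i : Fin n, ∑ x ∈ S, Real.log (cntJ S {i} x) := by
    rw [Finset.sum_congr rfl (fun i _ => hinner i), Finset.sum_sub_distrib, Finset.sum_const,
      Finset.card_univ, Fintype.card_fin, nsmul_eq_mul]
  rw [hexp]
  have := T1 S
  linarith

theorem branch3 {n : ℕ} (hn : 1 ≤ n) (S : Finset (V 3 n))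
    (h1 : 3 ^ (n-1) ≤ S.card) (h2 : 3 ^ (n-1) ≤ Sᶜ.card) :
    2 * 3 ^ (n-1) ≤ bdry S := by
  classical
  set K : ℝ := 3 * Real.log 3 - 2 * Real.log 2 with hKdef
  have hK0 : 0 < K := by
    have h32 : Real.log 2 < Real.log 3 := Real.log_lt_log (by norm_num) (by norm_num)
    have h20 : 0 < Real.log 2 := Real.log_pos (by norm_num)
    rw [hKdef]; linarith
  have hTcard : S.card + Sᶜ.card = 3 ^ n := by
    rw [Finset.card_add_card_compl, fincard_V]
  set A : ℝ := ((3 ^ (n-1) : ℕ) : ℝ) with hA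
  set T : ℝ := ((3 ^ n : ℕ) : ℝ) with hT
  have hT3A : T = 3 * A := by
    rw [hA, hT]
    push_cast
    rw [← pow_succ']
    congr 1
    omega
  have hAm : A ≤ (S.card : ℝ) := by rw [hA]; exact_mod_cast h1
  have hmc : (Sᶜ.card : ℝ) = T - S.card := by
    rw [hT]
    have := hTcard
    push_cast [← this]
    ring
  have hmTA : (S.card : ℝ) ≤ T - A := by
    have h2' : A ≤ (Sᶜ.card : ℝ) := by rw [hA]; exact_mod_cast h2
    rw [hmc] at h2'
    linarith
  have hpair := xlogx_pair_le (by rw [hA]; positivity) hAm hmTA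
  -- from line identity and T1
  have hline := line_identity_three S
  have hs1 := slack_lower (L := 3) S
  have hs2 := slack_lower (L := 3) Sᶜ
  have hcompl3 : ((3:ℕ):ℝ) = (3:ℝ) := by norm_num
  rw [hcompl3] at hs1 hs2
  have hKb : K * (bdry S : ℝ)
      ≥ 2 * (((n:ℝ) * S.card * Real.log 3 - S.card * Real.log S.card)
           + ((n:ℝ) * Sᶜ.card * Real.log 3 - Sᶜ.card * Real.log Sᶜ.card)) := by
    rw [hline]
    have := add_le_add hs1 hs2
    linarith
  -- identify the target value
  have hAT : (n:ℝ) * S.card * Real.log 3 + (n:ℝ) * Sᶜ.card * Real.log 3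
      = (n:ℝ) * T * Real.log 3 := by
    rw [hmc]; ring
  have hlogA : Real.log A = ((n-1 : ℕ):ℝ) * Real.log 3 := by
    rw [hA]
    push_cast
    rw [Real.log_pow]
  have hA0 : A ≠ 0 := by rw [hA]; positivity
  have hlogTA : Real.log (T - A) = Real.log 2 + Real.log A := by
    have h2A : T - A = 2 * A := by rw [hT3A]; ring
    rw [h2A, Real.log_mul (by norm_num) hA0]
  have htarget : (n:ℝ) * T * Real.log 3 - (A * Real.log A + (T - A) * Real.log (T - A))
      = A * K := by
    rw [hlogTA, hT3A, hKdef]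
    have hn1 : ((n-1 : ℕ):ℝ) = (n:ℝ) - 1 := by
      push_cast [Nat.cast_sub hn]
      ring
    rw [hlogA, hn1]
    ring
  have hfinal : K * (bdry S : ℝ) ≥ 2 * (A * K) := by
    have hx : S.card * Real.log S.card + Sᶜ.card * Real.log Sᶜ.card
        ≤ A * Real.log A + (T - A) * Real.log (T - A) := by
      rw [hmc]
      exact hpair
    calc K * (bdry S : ℝ)
        ≥ 2 * (((n:ℝ) * S.card * Real.log 3 - S.card * Real.log S.card)
            + ((n:ℝ) * Sᶜ.card * Real.log 3 - Sᶜ.card * Real.log Sᶜ.card)) := hKb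
      _ ≥ 2 * (A * K) := by
          rw [← htarget]
          nlinarith [hx, hAT]
  have hdiv : (2 * A : ℝ) ≤ (bdry S : ℝ) := by
    apply le_of_mul_le_mul_left ?_ hK0
    linarith
  have hApow : A = (3:ℝ) ^ (n-1) := by rw [hA]; push_cast; ring
  have hfin : ((2 * 3 ^ (n-1) : ℕ) : ℝ) ≤ ((bdry S : ℕ) : ℝ) := by
    push_cast
    rw [← hApow]
    exact hdiv
  exact_mod_cast hfin

theorem core_aux (hL : 2 ≤ L) {t : ℕ} (htn : t + 1 ≤ n) (S : Finset (V L n))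
    (h1 : L ^ t ≤ S.card) (h2 : L ^ t ≤ Sᶜ.card) (hhalf : 2 * S.card ≤ L ^ n) :
    (L - 1) * (n - t) * L ^ t ≤ bdry S := by
  classical
  by_cases hbr : t + 2 ≤ n ∨ L ≠ 3
  · have hT2 := T2 S hL
    have hnum := numeric1 hL htn h1 hhalf hbr
    have hLr : (2:ℝ) ≤ (L:ℝ) := by exact_mod_cast hL
    have hL10 : (0:ℝ) ≤ (L:ℝ) - 1 := by linarith
    have hlogL : 0 < Real.log L := Real.log_pos (by linarith)
    have hchain : (((L:ℝ) - 1) * (((n - t : ℕ):ℝ) * (L:ℝ) ^ t)) * Real.log L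
        ≤ (bdry S : ℝ) * Real.log L := by
      calc (((L:ℝ) - 1) * (((n - t : ℕ):ℝ) * (L:ℝ) ^ t)) * Real.log L
          = ((L:ℝ) - 1) * (((n - t : ℕ):ℝ) * (L:ℝ) ^ t * Real.log L) := by ring
        _ ≤ ((L:ℝ) - 1) * ((S.card : ℝ) * ((n:ℝ) * Real.log L - Real.log S.card)) :=
            mul_le_mul_of_nonneg_left hnum hL10
        _ ≤ (bdry S : ℝ) * Real.log L := hT2
    have hreal : ((L:ℝ) - 1) * (((n - t : ℕ):ℝ) * (L:ℝ) ^ t) ≤ (bdry S : ℝ) :=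
      le_of_mul_le_mul_right (by linarith [hchain]) hlogL
    have hcast : (((L - 1) * (n - t) * L ^ t : ℕ) : ℝ)
        = ((L:ℝ) - 1) * (((n - t : ℕ):ℝ) * (L:ℝ) ^ t) := by
      push_cast [Nat.cast_sub (by omega : 1 ≤ L)]
      ring
    exact_mod_cast hcast ▸ hreal
  · push_neg at hbr
    obtain ⟨hn2, hL3⟩ := hbr
    subst hL3
    have hnt : n - 1 = t := by omega
    have hb := branch3 (by omega : 1 ≤ n) S (by rw [hnt]; exact h1) (by rw [hnt]; exact h2)
    have : (3 - 1) * (n - t) * 3 ^ t = 2 * 3 ^ (n - 1) := by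
      have h1' : n - t = 1 := by omega
      rw [h1', hnt]
    calc (3 - 1) * (n - t) * 3 ^ t = 2 * 3 ^ (n-1) := this
      _ ≤ bdry S := hb

theorem core (hL : 2 ≤ L) {t : ℕ} (htn : t + 1 ≤ n) (S : Finset (V L n))
    (h1 : L ^ t ≤ S.card) (h2 : L ^ t ≤ Sᶜ.card) :
    (L - 1) * (n - t) * L ^ t ≤ bdry S := by
  classical
  rcases le_or_gt (2 * S.card) (L ^ n) with hhalf | hhalf
  · exact core_aux hL htn S h1 h2 hhalf
  · have hcards := Finset.card_add_card_compl S
    rw [fincard_V] at hcards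
    have hhalf' : 2 * Sᶜ.card ≤ L ^ n := by omega
    have h1' : L ^ t ≤ Sᶜᶜ.card := by rw [compl_compl]; exact h1
    have := core_aux hL htn Sᶜ h2 h1' hhalf'
    rw [bdry_compl]
    exact this

/-! ## Relating `bdry` to graph cuts -/

lemma adj_iff {u v : V L n} :
    (hammingGraph L n).Adj u v ↔ ∃ i, u i ≠ v i ∧ ∀ j, j ≠ i → u j = v j := by
  show (u ≠ v ∧ ∀ i j : Fin n, u i ≠ v i → u j ≠ v j → i = j) ↔ _
  constructor
  · rintro ⟨hne, huni⟩
    have hex : ∃ i, u i ≠ v i := by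
      by_contra h
      push_neg at h
      exact hne (funext h)
    obtain ⟨i, hi⟩ := hex
    refine ⟨i, hi, fun j hj => ?_⟩
    by_contra hji
    exact hj (huni j i hji hi)
  · rintro ⟨i, hi, hoth⟩
    refine ⟨fun hc => hi (congrFun hc i), fun j k hj hk => ?_⟩
    have hj' : j = i := by
      by_contra hc
      exact hj (hoth j hc)
    have hk' : k = i := by
      by_contra hc
      exact hk (hoth k hc)
    rw [hj', hk']

lemma adj_of_rep {u v : V L n} {i : Fin n} (hne : u ≠ v) (h : repJ {i} u = repJ {i} v) :
    (hammingGraph L n).Adj u v := by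
  rw [adj_iff]
  refine ⟨i, ?_, ?_⟩
  · by_contra hc
    apply hne
    funext j
    by_cases hj : j = i
    · rw [hj]; exact hc
    · exact (repJ_eq_iff.1 h) j (by simpa using hj)
  · intro j hj
    exact (repJ_eq_iff.1 h) j (by simpa using hj)

lemma rep_of_adj {u v : V L n} (h : (hammingGraph L n).Adj u v) :
    ∃ i, repJ {i} u = repJ {i} v ∧ u i ≠ v i := by
  rw [adj_iff] at h
  obtain ⟨i, hi, hoth⟩ := h
  refine ⟨i, ?_, hi⟩
  rw [repJ_eq_iff]
  intro j hj
  exact hoth j (by simpa using hj)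

/-- If every `G`-edge crossing `S` belongs to `F`, then `bdry S ≤ F.card`. -/
lemma bdry_le_card (S : Finset (V L n)) (F : Finset (Sym2 (V L n)))
    (hcut : ∀ x y, x ∈ S → y ∉ S → (hammingGraph L n).Adj x y → s(x, y) ∈ F) :
    bdry S ≤ F.card := by
  classical
  have hb : bdry S = ((univ : Finset (Fin n)).sigma (fun i : Fin n =>
      (S ×ˢ Sᶜ).filter (fun p => repJ {i} p.2 = repJ {i} p.1))).card := by
    rw [Finset.card_sigma]
    unfold bdry
    refine Finset.sum_congr rfl (fun i _ => ?_)
    rw [Finset.sum_congr rfl (fun x (_ : x ∈ S) => cnt_compl' S i x)]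
    have hmaps : ∀ p ∈ (S ×ˢ Sᶜ).filter (fun p => repJ {i} p.2 = repJ {i} p.1), p.1 ∈ S := by
      intro p hp
      exact (Finset.mem_product.1 (Finset.mem_of_mem_filter _ hp)).1
    rw [Finset.card_eq_sum_card_fiberwise hmaps]
    refine Finset.sum_congr rfl (fun x hx => ?_)
    unfold cntJ
    apply Finset.card_bij' (fun y _ => (x, y)) (fun p _ => p.2)
    · intro y hy
      simp only [Finset.mem_filter] at hy
      simp only [Finset.mem_filter, Finset.mem_product]
      exact ⟨⟨⟨hx, hy.1⟩, hy.2⟩, trivial⟩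
    · intro p hp
      simp only [Finset.mem_filter, Finset.mem_product] at hp
      obtain ⟨⟨⟨hp1, hp2⟩, hrep⟩, hfst⟩ := hp
      simp only [Finset.mem_filter]
      refine ⟨hp2, ?_⟩
      rw [← hfst]; exact hrep
    · intro y hy
      rfl
    · intro p hp
      simp only [Finset.mem_filter, Finset.mem_product] at hp
      obtain ⟨-, hfst⟩ := hp
      exact Prod.ext hfst.symm rfl
  rw [hb]
  apply Finset.card_le_card_of_injOn (fun q => s(q.2.1, q.2.2))
  · rintro ⟨i, x, y⟩ hq
    simp only [Finset.coe_sigma, Set.mem_sigma_iff, Finset.mem_coe, Finset.mem_sigma, Finset.mem_filter, Finset.mem_product] at hq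
    obtain ⟨-, ⟨⟨hxS, hyS⟩, hrep⟩⟩ := hq
    have hyS' : y ∉ S := by simpa using hyS
    have hne : x ≠ y := by
      rintro rfl
      exact hyS' hxS
    exact hcut x y hxS hyS' (adj_of_rep hne hrep.symm)
  · rintro ⟨i, x, y⟩ hq ⟨i', x', y'⟩ hq' heq
    simp only [Finset.coe_sigma, Set.mem_sigma_iff, Finset.mem_coe, Finset.mem_filter,
      Finset.mem_product] at hq hq'
    obtain ⟨-, ⟨⟨hxS, hyS⟩, hrep⟩⟩ := hq
    obtain ⟨-, ⟨⟨hxS', hyS'⟩, hrep'⟩⟩ := hq'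
    have hyS2 : y ∉ S := by simpa using hyS
    have hyS2' : y' ∉ S := by simpa using hyS'
    have heq' : s(x, y) = s(x', y') := heq
    have hxy : x = x' ∧ y = y' := by
      have := Sym2.eq_iff.1 heq'
      rcases this with ⟨h1, h2⟩ | ⟨h1, h2⟩
      · exact ⟨h1, h2⟩
      · exact absurd (h1 ▸ hxS) hyS2'
    obtain ⟨rfl, rfl⟩ := hxy
    have hii : i = i' := by
      by_contra hne
      have hxyne : x ≠ y := by
        rintro rfl
        exact hyS2 hxS
      apply hxyne
      funext j
      rcases eq_or_ne j i with rfl | hji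
      · have : j ∉ ({i'} : Finset (Fin n)) := by simpa using (by simpa using hne : j ≠ i')
        exact ((repJ_eq_iff.1 hrep') j this).symm
      · have : j ∉ ({i} : Finset (Fin n)) := by simpa using hji
        exact ((repJ_eq_iff.1 hrep) j this).symm
    subst hii
    rfl

/-! ## Lower bound -/

theorem lower_bound {t : ℕ} (hL : 2 ≤ L) (htn : t + 1 ≤ n)
    (F : Finset (Sym2 (V L n)))
    (hncon : ¬((hammingGraph L n).deleteEdges ↑F).Connected)
    (hcomp : ∀ C : ((hammingGraph L n).deleteEdges ↑F).ConnectedComponent,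
      L ^ t ≤ C.supp.ncard) :
    (L - 1) * (n - t) * L ^ t ≤ F.card := by
  classical
  set G' := (hammingGraph L n).deleteEdges (↑F : Set (Sym2 (V L n))) with hG'
  haveI : Nonempty (V L n) := ⟨fun _ => 0⟩
  have hpre : ¬ G'.Preconnected := fun hp => hncon ⟨hp⟩
  have hex : ∃ u v : V L n, ¬ G'.Reachable u v := by
    by_contra hc
    push_neg at hc
    exact hpre hc
  obtain ⟨u, v, huv⟩ := hex
  set S : Finset (V L n) := univ.filter
    (fun x => G'.connectedComponentMk x = G'.connectedComponentMk u) with hS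
  set T : Finset (V L n) := univ.filter
    (fun x => G'.connectedComponentMk x = G'.connectedComponentMk v) with hT
  have hsupp : ∀ w : V L n, (G'.connectedComponentMk w).supp.ncard
      = (univ.filter (fun x => G'.connectedComponentMk x = G'.connectedComponentMk w)).card := by
    intro w
    rw [Set.ncard_eq_toFinset_card']
    congr 1
    ext x
    rw [Set.mem_toFinset]
    simp [SimpleGraph.ConnectedComponent.supp]
  have h1 : L ^ t ≤ S.card := by
    rw [hS, ← hsupp u]
    exact hcomp _
  have hTS : T ⊆ Sᶜ := by
    intro x hx
    rw [Finset.mem_compl]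
    intro hxS
    apply huv
    have e1 : G'.connectedComponentMk x = G'.connectedComponentMk u := (Finset.mem_filter.1 hxS).2
    have e2 : G'.connectedComponentMk x = G'.connectedComponentMk v := (Finset.mem_filter.1 hx).2
    exact (SimpleGraph.ConnectedComponent.eq.1 (e1.symm.trans e2))
  have h2 : L ^ t ≤ Sᶜ.card := by
    calc L ^ t ≤ T.card := by rw [hT, ← hsupp v]; exact hcomp _
      _ ≤ Sᶜ.card := Finset.card_le_card hTS
  have hcut : ∀ x y, x ∈ S → y ∉ S → (hammingGraph L n).Adj x y → s(x, y) ∈ F := by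
    intro x y hxS hyS hadj
    by_contra hnF
    have hadj' : G'.Adj x y := by
      rw [hG', SimpleGraph.deleteEdges_adj]
      exact ⟨hadj, fun hc => hnF (Finset.mem_coe.1 hc)⟩
    apply hyS
    rw [hS, Finset.mem_filter]
    refine ⟨Finset.mem_univ _, ?_⟩
    have e1 : G'.connectedComponentMk y = G'.connectedComponentMk x :=
      SimpleGraph.ConnectedComponent.sound hadj'.symm.reachable
    rw [e1]
    exact (Finset.mem_filter.1 hxS).2
  calc (L - 1) * (n - t) * L ^ t ≤ bdry S := core hL htn S h1 h2
    _ ≤ F.card := bdry_le_card S F hcut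

/-! ## Upper bound construction -/

def Wcube (L n t : ℕ) [NeZero L] : Finset (V L n) :=
  univ.filter (fun u => ∀ i : Fin n, t ≤ (i:ℕ) → u i = 0)

def Icoords (n t : ℕ) : Finset (Fin n) := univ.filter (fun i : Fin n => t ≤ (i:ℕ))

def Cvals (L : ℕ) [NeZero L] : Finset (Fin L) := univ.filter (fun c : Fin L => c ≠ 0)

def Fcut (L n t : ℕ) [NeZero L] : Finset (Sym2 (V L n)) :=
  ((Wcube L n t) ×ˢ ((Icoords n t) ×ˢ (Cvals L))).image
    (fun q => s(q.1, Function.update q.1 q.2.1 q.2.2))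

lemma mem_Wcube {t : ℕ} {u : V L n} :
    u ∈ Wcube L n t ↔ ∀ i : Fin n, t ≤ (i:ℕ) → u i = 0 := by
  simp [Wcube]

lemma card_Icoords {t : ℕ} (htn : t ≤ n) : (Icoords n t).card = n - t := by
  classical
  have h : (Icoords n t).card = (Finset.Ico t n).card := by
    refine Finset.card_bij (fun (i : Fin n) (_ : i ∈ Icoords n t) => (i:ℕ)) ?_ ?_ ?_
    · intro i hi
      rw [Finset.mem_Ico]
      exact ⟨by simpa [Icoords] using hi, i.isLt⟩
    · intro a ha b hb hab
      exact Fin.ext hab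
    · intro m hm
      rw [Finset.mem_Ico] at hm
      exact ⟨⟨m, hm.2⟩, by simp [Icoords, hm.1], rfl⟩
  rw [h, Nat.card_Ico]

lemma card_Cvals (hL : 2 ≤ L) : (Cvals L).card = L - 1 := by
  classical
  rw [Cvals, Finset.filter_ne', Finset.card_erase_of_mem (Finset.mem_univ _),
    Finset.card_univ, Fintype.card_fin]

lemma card_Wcube {t : ℕ} (htn : t ≤ n) : (Wcube L n t).card = L ^ t := by
  classical
  have h : (Wcube L n t).card = (univ : Finset (Fin t → Fin L)).card := by
    refine Finset.card_bij'
      (fun (u : V L n) (_ : u ∈ Wcube L n t) => (fun j : Fin t => u (Fin.castLE htn j)))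
      (fun (f : Fin t → Fin L) (_ : f ∈ univ) =>
        (fun i : Fin n => if h : (i:ℕ) < t then f ⟨i, h⟩ else 0)) ?_ ?_ ?_ ?_
    · intro u hu
      exact Finset.mem_univ _
    · intro f _
      rw [mem_Wcube]
      intro i hi
      rw [dif_neg (by omega)]
    · intro u hu
      funext i
      dsimp only
      by_cases h : (i:ℕ) < t
      · rw [dif_pos h]
        have he : Fin.castLE htn ⟨(i:ℕ), h⟩ = i := Fin.ext rfl
        rw [he]
      · rw [dif_neg h]
        exact ((mem_Wcube.1 hu) i (by omega)).symm
    · intro f _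
      funext j
      dsimp only
      have hlt : ((Fin.castLE htn j : Fin n) : ℕ) < t := j.isLt
      rw [dif_pos hlt]
      exact congrArg f (Fin.ext rfl)
  rw [h, Finset.card_univ, Fintype.card_fun, Fintype.card_fin, Fintype.card_fin]

lemma adj_update {u : V L n} {i : Fin n} {c : Fin L} (h : u i ≠ c) :
    (hammingGraph L n).Adj u (Function.update u i c) := by
  rw [adj_iff]
  refine ⟨i, ?_, ?_⟩
  · simpa using h
  · intro j hj
    simp [Function.update, hj]

lemma mem_Fcut_elim {t : ℕ} {e : Sym2 (V L n)} (he : e ∈ Fcut L n t) :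
    ∃ u v : V L n, e = s(u, v) ∧ u ∈ Wcube L n t ∧ v ∉ Wcube L n t
      ∧ (hammingGraph L n).Adj u v := by
  classical
  rw [Fcut, Finset.mem_image] at he
  obtain ⟨⟨u, i, c⟩, hq, rfl⟩ := he
  simp only [Finset.mem_product] at hq
  obtain ⟨huW, hi, hc⟩ := hq
  have hti : t ≤ (i:ℕ) := by simpa [Icoords] using hi
  have hc0 : c ≠ 0 := by simpa [Cvals] using hc
  have hui : u i = 0 := (mem_Wcube.1 huW) i hti
  refine ⟨u, Function.update u i c, rfl, huW, ?_, ?_⟩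
  · rw [mem_Wcube]
    push_neg
    exact ⟨i, hti, by simp [Function.update, hc0]⟩
  · apply adj_update
    rw [hui]
    exact fun hcc => hc0 hcc.symm

lemma cross_in_Fcut {t : ℕ} {x y : V L n} (hadj : (hammingGraph L n).Adj x y)
    (hx : x ∈ Wcube L n t) (hy : y ∉ Wcube L n t) : s(x, y) ∈ Fcut L n t := by
  classical
  obtain ⟨i, hrep, hne⟩ := rep_of_adj hadj
  have hyW := hy
  rw [mem_Wcube] at hyW
  push_neg at hyW
  obtain ⟨j, htj, hyj⟩ := hyW
  have hji : j = i := by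
    by_contra hc
    have : x j = y j := by
      have := (repJ_eq_iff.1 hrep.symm) j (by simpa using hc)
      exact this.symm
    exact hyj (by rw [← this]; exact (mem_Wcube.1 hx) j htj)
  subst hji
  rw [Fcut, Finset.mem_image]
  refine ⟨(x, j, y j), ?_, ?_⟩
  · simp only [Finset.mem_product]
    refine ⟨hx, by simp [Icoords, htj], by simp [Cvals, hyj]⟩
  · have : Function.update x j (y j) = y := by
      funext k
      by_cases hk : k = j
      · subst hk; simp [Function.update]
      · simp only [Function.update, dif_neg hk]
        exact ((repJ_eq_iff.1 hrep.symm) k (by simpa using hk)).symm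
    rw [this]

lemma survive_in {t : ℕ} {a b : V L n} (ha : a ∈ Wcube L n t) (hb : b ∈ Wcube L n t) :
    s(a, b) ∉ Fcut L n t := by
  intro hc
  obtain ⟨u, v, he, huW, hvW, -⟩ := mem_Fcut_elim hc
  rcases Sym2.eq_iff.1 he with ⟨h1, h2⟩ | ⟨h1, h2⟩
  · exact hvW (h2 ▸ hb)
  · exact hvW (h1 ▸ ha)

lemma survive_out {t : ℕ} {a b : V L n} (ha : a ∉ Wcube L n t) (hb : b ∉ Wcube L n t) :
    s(a, b) ∉ Fcut L n t := by
  intro hc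
  obtain ⟨u, v, he, huW, hvW, -⟩ := mem_Fcut_elim hc
  rcases Sym2.eq_iff.1 he with ⟨h1, h2⟩ | ⟨h1, h2⟩
  · exact ha (h1 ▸ huW)
  · exact hb (h2 ▸ huW)

lemma reach_zero {t : ℕ} : ∀ (d : ℕ) (u : V L n), u ∈ Wcube L n t →
    (univ.filter (fun j => u j ≠ 0)).card = d →
    ((hammingGraph L n).deleteEdges ↑(Fcut L n t)).Reachable u (fun _ => 0) := by
  classical
  intro d
  induction d with
  | zero =>
    intro u hu hcard
    have : u = fun _ => 0 := by
      funext j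
      by_contra hc
      have hj : j ∈ univ.filter (fun j => u j ≠ 0) := by simp [hc]
      rw [Finset.card_eq_zero.1 hcard] at hj
      exact absurd hj (Finset.notMem_empty _)
    rw [this]
  | succ d ih =>
    intro u hu hcard
    have hex : ∃ j, u j ≠ 0 := by
      by_contra hc
      push_neg at hc
      have : univ.filter (fun j => u j ≠ 0) = ∅ := by
        apply Finset.filter_eq_empty_iff.2
        intro j _
        simp [hc j]
      rw [this] at hcard
      simp at hcard
    obtain ⟨j, hj⟩ := hex
    set u' := Function.update u j 0 with hu'def
    have hu' : u' ∈ Wcube L n t := by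
      rw [mem_Wcube]
      intro i hi
      rw [hu'def]
      by_cases hij : i = j
      · subst hij; simp [Function.update]
      · simp only [Function.update, dif_neg hij]
        exact (mem_Wcube.1 hu) i hi
    have hadj : (hammingGraph L n).Adj u u' := adj_update hj
    have hadj' : ((hammingGraph L n).deleteEdges ↑(Fcut L n t)).Adj u u' := by
      rw [SimpleGraph.deleteEdges_adj]
      exact ⟨hadj, fun hc => survive_in hu hu' (Finset.mem_coe.1 hc)⟩
    have hmeas : (univ.filter (fun k => u' k ≠ 0)).card = d := by
      have heq : univ.filter (fun k => u' k ≠ 0) = (univ.filter (fun k => u k ≠ 0)).erase j := by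
        ext k
        simp only [Finset.mem_filter, Finset.mem_univ, true_and, Finset.mem_erase, hu'def]
        by_cases hk : k = j
        · subst hk; simp [Function.update]
        · simp [Function.update, hk]
      rw [heq, Finset.card_erase_of_mem (by simp [hj]), hcard]
      omega
    exact hadj'.reachable.trans (ih u' hu' hmeas)

lemma reach_const {t : ℕ} (e : Fin L) (he : e ≠ 0) : ∀ (d : ℕ) (u : V L n),
    (∃ i₀ : Fin n, t ≤ (i₀:ℕ) ∧ u i₀ ≠ 0) →
    (univ.filter (fun j => u j ≠ e)).card = d →
    ((hammingGraph L n).deleteEdges ↑(Fcut L n t)).Reachable u (fun _ => e) := by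
  classical
  intro d
  induction d with
  | zero =>
    intro u hinv hcard
    have : u = fun _ => e := by
      funext j
      by_contra hc
      have hj : j ∈ univ.filter (fun j => u j ≠ e) := by simp [hc]
      rw [Finset.card_eq_zero.1 hcard] at hj
      exact absurd hj (Finset.notMem_empty _)
    rw [this]
  | succ d ih =>
    intro u hinv hcard
    have hex : ∃ j, u j ≠ e := by
      by_contra hc
      push_neg at hc
      have : univ.filter (fun j => u j ≠ e) = ∅ := by
        apply Finset.filter_eq_empty_iff.2
        intro j _
        simp [hc j]
      rw [this] at hcard
      simp at hcard
    obtain ⟨j, hj⟩ := hex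
    obtain ⟨i₀, hti₀, hui₀⟩ := hinv
    set u' := Function.update u j e with hu'def
    have hnotW : u ∉ Wcube L n t := by
      rw [mem_Wcube]
      push_neg
      exact ⟨i₀, hti₀, hui₀⟩
    have hinv' : ∃ i₀ : Fin n, t ≤ (i₀:ℕ) ∧ u' i₀ ≠ 0 := by
      refine ⟨i₀, hti₀, ?_⟩
      rw [hu'def]
      by_cases hij : i₀ = j
      · subst hij; simp [Function.update, he]
      · simp only [Function.update, dif_neg hij]
        exact hui₀
    have hnotW' : u' ∉ Wcube L n t := by
      rw [mem_Wcube]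
      push_neg
      exact hinv'
    have hadj : (hammingGraph L n).Adj u u' := adj_update hj
    have hadj' : ((hammingGraph L n).deleteEdges ↑(Fcut L n t)).Adj u u' := by
      rw [SimpleGraph.deleteEdges_adj]
      exact ⟨hadj, fun hc => survive_out hnotW hnotW' (Finset.mem_coe.1 hc)⟩
    have hmeas : (univ.filter (fun k => u' k ≠ e)).card = d := by
      have heq : univ.filter (fun k => u' k ≠ e) = (univ.filter (fun k => u k ≠ e)).erase j := by
        ext k
        simp only [Finset.mem_filter, Finset.mem_univ, true_and, Finset.mem_erase, hu'def]
        by_cases hk : k = j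
        · subst hk; simp [Function.update]
        · simp [Function.update, hk]
      rw [heq, Finset.card_erase_of_mem (by simp [hj]), hcard]
      omega
    exact hadj'.reachable.trans (ih u' hinv' hmeas)

lemma card_Fcut {t : ℕ} (hL : 2 ≤ L) (htn : t + 1 ≤ n) :
    (Fcut L n t).card = (L - 1) * (n - t) * L ^ t := by
  classical
  rw [Fcut]
  rw [Finset.card_image_of_injOn ?inj]
  · rw [Finset.card_product, Finset.card_product, card_Wcube (by omega), card_Icoords (by omega),
      card_Cvals hL]
    ring
  case inj =>
    rintro ⟨u, i, c⟩ hq ⟨u', i', c'⟩ hq' heq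
    simp only [Finset.mem_coe, Finset.mem_product] at hq hq'
    obtain ⟨huW, hi, hc⟩ := hq
    obtain ⟨huW', hi', hc'⟩ := hq'
    have hti : t ≤ (i:ℕ) := by simpa [Icoords] using hi
    have hti' : t ≤ (i':ℕ) := by simpa [Icoords] using hi'
    have hc0 : c ≠ 0 := by simpa [Cvals] using hc
    have hc0' : c' ≠ 0 := by simpa [Cvals] using hc'
    have hui : u i = 0 := (mem_Wcube.1 huW) i hti
    have hvW' : Function.update u' i' c' ∉ Wcube L n t := by
      rw [mem_Wcube]
      push_neg
      exact ⟨i', hti', by simp [Function.update, hc0']⟩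
    have heq' : s(u, Function.update u i c) = s(u', Function.update u' i' c') := heq
    have huu : u = u' ∧ Function.update u i c = Function.update u' i' c' := by
      rcases Sym2.eq_iff.1 heq' with ⟨h1, h2⟩ | ⟨h1, h2⟩
      · exact ⟨h1, h2⟩
      · exact absurd (h1 ▸ huW) hvW'
    obtain ⟨rfl, hupd⟩ := huu
    have hii : i = i' := by
      by_contra hne
      have h1 : Function.update u i c i = Function.update u i' c' i := congrFun hupd i
      rw [Function.update_self, Function.update_of_ne hne, hui] at h1
      exact hc0 h1
    subst hii
    have hcc : c = c' := by
      have h1 : Function.update u i c i = Function.update u i c' i := congrFun hupd i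
      rwa [Function.update_self, Function.update_self] at h1
    subst hcc
    rfl

lemma Fcut_sub {t : ℕ} : ↑(Fcut L n t) ⊆ (hammingGraph L n).edgeSet := by
  intro e he
  obtain ⟨u, v, he2, -, -, hadj⟩ := mem_Fcut_elim (Finset.mem_coe.1 he)
  rw [he2, SimpleGraph.mem_edgeSet]
  exact hadj

lemma comp_large {t : ℕ} (hL : 2 ≤ L) (htn : t + 1 ≤ n)
    (C : ((hammingGraph L n).deleteEdges ↑(Fcut L n t)).ConnectedComponent) :
    L ^ t ≤ C.supp.ncard := by
  classical
  obtain ⟨v, rfl⟩ := C.exists_rep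
  by_cases hv : v ∈ Wcube L n t
  · have hsub : ↑(Wcube L n t) ⊆
        (((hammingGraph L n).deleteEdges ↑(Fcut L n t)).connectedComponentMk v).supp := by
      intro w hw
      have hw' : w ∈ Wcube L n t := hw
      have h1 := reach_zero (L := L) (n := n) (t := t) _ w hw' rfl
      have h2 := reach_zero (L := L) (n := n) (t := t) _ v hv rfl
      rw [SimpleGraph.ConnectedComponent.mem_supp_iff]
      exact SimpleGraph.ConnectedComponent.sound (h1.trans h2.symm)
    calc L ^ t = (Wcube L n t).card := (card_Wcube (by omega)).symm
      _ = (↑(Wcube L n t) : Set (V L n)).ncard := (Set.ncard_coe_finset _).symm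
      _ ≤ _ := Set.ncard_le_ncard hsub (Set.toFinite _)
  · have hone : (⟨1, by omega⟩ : Fin L) ≠ 0 := by
      intro hc
      have := congrArg Fin.val hc
      simpa using this
    have hsub : ↑((Wcube L n t)ᶜ) ⊆
        (((hammingGraph L n).deleteEdges ↑(Fcut L n t)).connectedComponentMk v).supp := by
      intro w hw
      have hw' : w ∉ Wcube L n t := by simpa using hw
      have hinvw : ∃ i₀ : Fin n, t ≤ (i₀:ℕ) ∧ w i₀ ≠ 0 := by
        rw [mem_Wcube] at hw'
        push_neg at hw'
        exact hw'
      have hinvv : ∃ i₀ : Fin n, t ≤ (i₀:ℕ) ∧ v i₀ ≠ 0 := by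
        rw [mem_Wcube] at hv
        push_neg at hv
        exact hv
      have h1 := reach_const (L := L) (n := n) (t := t) _ hone _ w hinvw rfl
      have h2 := reach_const (L := L) (n := n) (t := t) _ hone _ v hinvv rfl
      rw [SimpleGraph.ConnectedComponent.mem_supp_iff]
      exact SimpleGraph.ConnectedComponent.sound (h1.trans h2.symm)
    have hcardc : ((Wcube L n t)ᶜ).card = L ^ n - L ^ t := by
      rw [Finset.card_compl, card_Wcube (by omega), fincard_V]
    have hge : L ^ t ≤ L ^ n - L ^ t := by
      have h1 : L ^ (t+1) ≤ L ^ n := Nat.pow_le_pow_right (by omega) htn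
      have h2 : 2 * L ^ t ≤ L ^ (t+1) := by
        rw [pow_succ]
        have := Nat.mul_le_mul_left (L ^ t) hL
        omega
      omega
    calc L ^ t ≤ ((Wcube L n t)ᶜ).card := by omega
      _ = (↑((Wcube L n t)ᶜ) : Set (V L n)).ncard := (Set.ncard_coe_finset _).symm
      _ ≤ _ := Set.ncard_le_ncard hsub (Set.toFinite _)

lemma not_connected {t : ℕ} (hL : 2 ≤ L) (htn : t + 1 ≤ n) :
    ¬ ((hammingGraph L n).deleteEdges ↑(Fcut L n t)).Connected := by
  classical
  intro hcon
  have key : ∀ a b : V L n, ((hammingGraph L n).deleteEdges ↑(Fcut L n t)).Reachable a b →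
      (a ∈ Wcube L n t ↔ b ∈ Wcube L n t) := by
    intro a b hr
    obtain ⟨w⟩ := hr
    induction w with
    | nil => exact Iff.rfl
    | cons hadj p ih =>
      rename_i x y z
      have hxy : x ∈ Wcube L n t ↔ y ∈ Wcube L n t := by
        rw [SimpleGraph.deleteEdges_adj] at hadj
        constructor
        · intro hx
          by_contra hy
          exact hadj.2 (Finset.mem_coe.2 (cross_in_Fcut hadj.1 hx hy))
        · intro hy
          by_contra hx
          have hmem := cross_in_Fcut hadj.1.symm hy hx
          rw [Sym2.eq_swap] at hmem
          exact hadj.2 (Finset.mem_coe.2 hmem)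
      exact hxy.trans ih
  have h0 : (fun _ => (0 : Fin L)) ∈ Wcube L n t := by
    rw [mem_Wcube]
    intro i hi
    rfl
  have h1 : (fun _ => (⟨1, by omega⟩ : Fin L)) ∉ Wcube L n t := by
    rw [mem_Wcube]
    push_neg
    refine ⟨⟨n - 1, by omega⟩, by simp; omega, ?_⟩
    intro hc
    have := congrArg Fin.val hc
    simpa using this
  exact h1 ((key _ _ (hcon.preconnected _ _)).1 h0)

end HIso

theorem stmt9 (L n t : ℕ) (hL : 2 ≤ L) (hn : 1 ≤ n) (ht : t ≤ n - 1) :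
    extraEC L n (L ^ t) = (L - 1) * (n - t) * L ^ t := by
  haveI : NeZero L := ⟨by omega⟩
  have htn : t + 1 ≤ n := by omega
  have hmem : (L - 1) * (n - t) * L ^ t ∈ {k | ∃ F : Finset (Sym2 (Fin n → Fin L)),
      ↑F ⊆ (hammingGraph L n).edgeSet ∧
      ¬((hammingGraph L n).deleteEdges ↑F).Connected ∧
      (∀ C : ((hammingGraph L n).deleteEdges ↑F).ConnectedComponent, L ^ t ≤ C.supp.ncard) ∧
      F.card = (L - 1) * (n - t) * L ^ t} :=
    ⟨HIso.Fcut L n t, HIso.Fcut_sub, HIso.not_connected hL htn,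
      fun C => HIso.comp_large hL htn C, HIso.card_Fcut hL htn⟩
  rw [extraEC]
  apply le_antisymm
  · exact Nat.sInf_le hmem
  · refine le_csInf ⟨_, hmem⟩ ?_
    rintro k ⟨F, hsub, hncon, hcomp, rfl⟩
    exact HIso.lower_bound hL htn F hncon hcomp
end
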